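/- arXiv:1811.05209 — 3 statements merged into one kernel-verified Lean document; each statement's English description precedes it below -/
import Mathlib

section
/- Let $n \ge 1$ and $1 < p < \infty$. A weight $w$ on $\mathbb{R}^n$ belongs to the class $C_p$ if and only if there exist constants $C, \delta > 0$ such that for every cube $Q$ with sides parallel to the coordinate axes, $\left( \frac{1}{|Q|} \int_Q w^{1+\delta} \right)^{1/(1+\delta)} \le \frac{C}{|Q|} \int_{\mathbb{R}^n} (M\chi_Q)^p \, w$. -/
open MeasureTheory ENNReal Metric Set Filter

noncomputable section

/-- The uncentered Hardy–Littlewood maximal operator over axis-parallel cubes.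
Axis-parallel cubes in `ℝⁿ = Fin n → ℝ` are exactly the closed balls of the
sup metric, so a cube with center `c` and side length `2r` is `closedBall c r`. -/
def maxOp (n : ℕ) (f : (Fin n → ℝ) → ℝ≥0∞) (x : Fin n → ℝ) : ℝ≥0∞ :=
  ⨆ (c : Fin n → ℝ) (r : ℝ) (_ : 0 < r) (_ : x ∈ closedBall c r),
    (volume (closedBall c r))⁻¹ * ∫⁻ y in closedBall c r, f y

/-- `ℝ≥0∞`-valued characteristic function of a set. -/
def chi (n : ℕ) (Q : Set (Fin n → ℝ)) : (Fin n → ℝ) → ℝ≥0∞ := Q.indicator 1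

/-- The `C_p`-tail of the weight `w` at the cube `Q`: `∫_{ℝⁿ} (Mχ_Q)^p w`. -/
def cpTail (n : ℕ) (p : ℝ) (w : (Fin n → ℝ) → ℝ) (Q : Set (Fin n → ℝ)) : ℝ≥0∞ :=
  ∫⁻ x, (maxOp n (chi n Q) x) ^ p * ENNReal.ofReal (w x)

/-- The `C_p` constant `[w]_{C_p} = sup_Q (∫_Q M(χ_Q w)) / (∫_{ℝⁿ} (Mχ_Q)^p w)`. -/
def cpConst (n : ℕ) (p : ℝ) (w : (Fin n → ℝ) → ℝ) : ℝ≥0∞ :=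
  ⨆ (c : Fin n → ℝ) (r : ℝ) (_ : 0 < r),
    (∫⁻ x in closedBall c r,
        maxOp n ((closedBall c r).indicator fun y => ENNReal.ofReal (w y)) x) /
      cpTail n p w (closedBall c r)


/-- Distribution-set bound: from the `C_p`-type condition, the level sets of `w`
inside `Q` satisfy a power bound. -/
lemma dist_bound {α : Type*} [MeasurableSpace α] (μ : Measure α) {Q : Set α}
    (hQ : MeasurableSet Q) {w : α → ℝ} (hmw : Measurable w)
    (hVt : μ Q ≠ ∞) {K : ℝ≥0∞}
    {ε : ℝ} (hε : 0 < ε) (hε1 : ε < 1)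
    (h : ∀ E, E ⊆ Q → MeasurableSet E →
        ∫⁻ x in E, ENNReal.ofReal (w x) ∂μ ≤ K * (μ E / μ Q) ^ ε)
    {t : ℝ} (ht : 0 < t) :
    μ ({x | t < w x} ∩ Q) ≤ ((K * (μ Q)⁻¹ ^ ε) / ENNReal.ofReal t) ^ (1 / (1 - ε)) := by
  have h1ε : 0 < 1 - ε := by linarith
  set E := {x | t < w x} ∩ Q with hE
  have hEm : MeasurableSet E := (measurableSet_lt measurable_const hmw).inter hQ
  have hEQ : E ⊆ Q := inter_subset_right
  set m := μ E with hm
  rcases eq_or_ne m 0 with hm0 | hm0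
  · rw [hm0]; exact zero_le
  have hmt : m ≠ ∞ := (lt_of_le_of_lt (measure_mono hEQ) hVt.lt_top).ne
  have hlow : ENNReal.ofReal t * m ≤ ∫⁻ x in E, ENNReal.ofReal (w x) ∂μ := by
    calc ENNReal.ofReal t * m = ∫⁻ _ in E, ENNReal.ofReal t ∂μ :=
          (setLIntegral_const E (ENNReal.ofReal t)).symm
      _ ≤ ∫⁻ x in E, ENNReal.ofReal (w x) ∂μ :=
          setLIntegral_mono (ENNReal.measurable_ofReal.comp hmw)
            fun x hx => ENNReal.ofReal_le_ofReal (le_of_lt hx.1)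
  have step1 : ENNReal.ofReal t * m ≤ (K * (μ Q)⁻¹ ^ ε) * m ^ ε := by
    refine hlow.trans ((h E hEQ hEm).trans (le_of_eq ?_))
    rw [ENNReal.div_rpow_of_nonneg _ _ hε.le, div_eq_mul_inv, ← ENNReal.inv_rpow]
    ring
  have hm1 : m = m ^ (1 - ε) * m ^ ε := by
    rw [← ENNReal.rpow_add _ _ hm0 hmt, sub_add_cancel, ENNReal.rpow_one]
  have hme0 : m ^ ε ≠ 0 := by
    simp [ENNReal.rpow_eq_zero_iff, hm0, hmt]
  have hmet : m ^ ε ≠ ∞ := ENNReal.rpow_ne_top_of_nonneg hε.le hmt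
  have step2 : ENNReal.ofReal t * m ^ (1 - ε) ≤ K * (μ Q)⁻¹ ^ ε := by
    rw [← ENNReal.mul_le_mul_iff_left hme0 hmet, mul_assoc, ← hm1]
    exact step1
  have step3 : m ^ (1 - ε) ≤ K * (μ Q)⁻¹ ^ ε / ENNReal.ofReal t := by
    rw [ENNReal.le_div_iff_mul_le (Or.inl (by simp [ht, ht.not_ge])) (Or.inl ENNReal.ofReal_ne_top)]
    rwa [mul_comm]
  calc m = (m ^ (1 - ε)) ^ (1 / (1 - ε)) := by
        rw [← ENNReal.rpow_mul, mul_one_div_cancel h1ε.ne', ENNReal.rpow_one]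
    _ ≤ _ := ENNReal.rpow_le_rpow step3 (by positivity)

/-- Core reverse Hölder estimate from the self-improving measure condition. -/
lemma rh_core {α : Type*} [MeasurableSpace α] (μ : Measure α) {Q : Set α}
    (hQ : MeasurableSet Q) {w : α → ℝ} (hw : ∀ x, 0 ≤ w x) (hmw : Measurable w)
    (hV0 : μ Q ≠ 0) (hVt : μ Q ≠ ∞) {K : ℝ≥0∞} (hK0 : K ≠ 0) (hKt : K ≠ ∞)
    {ε : ℝ} (hε : 0 < ε) (hε1 : ε < 1)
    (h : ∀ E, E ⊆ Q → MeasurableSet E →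
        ∫⁻ x in E, ENNReal.ofReal (w x) ∂μ ≤ K * (μ E / μ Q) ^ ε) :
    ((μ Q)⁻¹ * ∫⁻ x in Q, ENNReal.ofReal (w x) ^ (1 + ε / (2 * (1 - ε))) ∂μ) ^
        (1 / (1 + ε / (2 * (1 - ε)))) ≤
      ENNReal.ofReal
          (((1 + ε / (2 * (1 - ε))) * (1 + 1 / (ε / (2 * (1 - ε))))) ^
            (1 / (1 + ε / (2 * (1 - ε))))) * K * (μ Q)⁻¹ := by
  have h1ε : 0 < 1 - ε := by linarith
  set δ := ε / (2 * (1 - ε)) with hδdef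
  have hδ : 0 < δ := by positivity
  set a := 1 / (1 - ε) with hadef
  have ha : a = 1 + 2 * δ := by
    rw [hadef, hδdef]; field_simp; ring
  have hεa : ε * a = 2 * δ := by
    rw [hadef, hδdef]; field_simp
  have ha0 : 0 < a := by positivity
  -- real versions of the constants
  set v := (μ Q).toReal with hvdef
  have hv : 0 < v := ENNReal.toReal_pos hV0 hVt
  have hVv : μ Q = ENNReal.ofReal v := (ENNReal.ofReal_toReal hVt).symm
  set κ := K.toReal with hκdef
  have hκ : 0 < κ := ENNReal.toReal_pos hK0 hKt
  have hKκ : K = ENNReal.ofReal κ := (ENNReal.ofReal_toReal hKt).symm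
  set lam := κ / v with hlamdef
  have hlam0 : 0 < lam := by positivity
  -- layer cake
  have hQI : ∫⁻ x in Q, ENNReal.ofReal (w x) ^ (1 + δ) ∂μ =
      ENNReal.ofReal (1 + δ) *
        ∫⁻ t in Ioi (0:ℝ), μ ({x | t < w x} ∩ Q) * ENNReal.ofReal (t ^ δ) := by
    have h1 : ∀ x, ENNReal.ofReal (w x) ^ (1 + δ) = ENNReal.ofReal (w x ^ (1 + δ)) :=
      fun x => ENNReal.ofReal_rpow_of_nonneg (hw x) (by linarith)
    simp_rw [h1]
    rw [lintegral_rpow_eq_lintegral_meas_lt_mul (μ.restrict Q)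
      (Filter.Eventually.of_forall hw) hmw.aemeasurable (by linarith : (0:ℝ) < 1 + δ)]
    congr 1
    refine lintegral_congr fun t => ?_
    rw [Measure.restrict_apply (measurableSet_lt measurable_const hmw), add_sub_cancel_left]
  -- split the t-integral
  set K' := K * (μ Q)⁻¹ ^ ε with hK'def
  have hK't : K' ≠ ∞ := by
    refine ENNReal.mul_ne_top hKt (ENNReal.rpow_ne_top_of_nonneg hε.le ?_)
    simp [hV0]
  have split : ∫⁻ t in Ioi (0:ℝ), μ ({x | t < w x} ∩ Q) * ENNReal.ofReal (t ^ δ) ≤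
      μ Q * ENNReal.ofReal (lam ^ δ) * ENNReal.ofReal lam
        + K' ^ a * ENNReal.ofReal (lam ^ (δ - a + 1) / δ) := by
    rw [← Ioc_union_Ioi_eq_Ioi hlam0.le, lintegral_union measurableSet_Ioi Ioc_disjoint_Ioi_same]
    gcongr
    · -- part 1
      calc ∫⁻ t in Ioc 0 lam, μ ({x | t < w x} ∩ Q) * ENNReal.ofReal (t ^ δ)
          ≤ ∫⁻ _ in Ioc (0:ℝ) lam, μ Q * ENNReal.ofReal (lam ^ δ) :=
            setLIntegral_mono measurable_const fun t htt =>
              mul_le_mul' (measure_mono inter_subset_right)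
                (ENNReal.ofReal_le_ofReal (Real.rpow_le_rpow htt.1.le htt.2 hδ.le))
        _ = μ Q * ENNReal.ofReal (lam ^ δ) * ENNReal.ofReal lam := by
            rw [setLIntegral_const, Real.volume_Ioc, sub_zero]
    · -- part 2
      have hsa : δ - a < -1 := by rw [ha]; linarith
      calc ∫⁻ t in Ioi lam, μ ({x | t < w x} ∩ Q) * ENNReal.ofReal (t ^ δ)
          ≤ ∫⁻ t in Ioi lam, K' ^ a * ENNReal.ofReal (t ^ (δ - a)) := by
            refine setLIntegral_mono (by fun_prop) fun t htt => ?_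
            have ht0 : 0 < t := hlam0.trans htt
            have hb := dist_bound (K := K) μ hQ hmw hVt hε hε1 h ht0
            calc μ ({x | t < w x} ∩ Q) * ENNReal.ofReal (t ^ δ)
                ≤ (K' / ENNReal.ofReal t) ^ a * ENNReal.ofReal (t ^ δ) := by
                  exact mul_le_mul' hb le_rfl
              _ = K' ^ a * ENNReal.ofReal (t ^ (δ - a)) := by
                  rw [ENNReal.div_rpow_of_nonneg _ _ ha0.le,
                    ENNReal.ofReal_rpow_of_pos ht0, div_eq_mul_inv, mul_assoc,
                    mul_comm (ENNReal.ofReal (t ^ a))⁻¹, ← div_eq_mul_inv,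
                    ← ENNReal.ofReal_div_of_pos (Real.rpow_pos_of_pos ht0 a),
                    ← Real.rpow_sub ht0]
        _ = K' ^ a * ∫⁻ t in Ioi lam, ENNReal.ofReal (t ^ (δ - a)) :=
            lintegral_const_mul' _ _ (ENNReal.rpow_ne_top_of_nonneg ha0.le hK't)
        _ = K' ^ a * ENNReal.ofReal (lam ^ (δ - a + 1) / δ) := by
            congr 1
            rw [← ofReal_integral_eq_lintegral_ofReal
              (integrableOn_Ioi_rpow_of_lt hsa hlam0)
              ((ae_restrict_iff' measurableSet_Ioi).2 (Filter.Eventually.of_forall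
                fun t htt => Real.rpow_nonneg (hlam0.trans htt).le _)),
              integral_Ioi_rpow_of_lt hsa hlam0]
            congr 1
            have hs : δ - a + 1 = -δ := by rw [ha]; ring
            rw [hs, div_neg, neg_div, neg_neg]
  -- convert the bound to a single `ofReal`
  have hKof : K' = ENNReal.ofReal (κ * v⁻¹ ^ ε) := by
    rw [hK'def, hKκ, hVv, ← ENNReal.ofReal_inv_of_pos hv,
      ENNReal.ofReal_rpow_of_pos (by positivity), ← ENNReal.ofReal_mul hκ.le]
  have hbound : ∫⁻ x in Q, ENNReal.ofReal (w x) ^ (1 + δ) ∂μ ≤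
      ENNReal.ofReal ((1 + δ) *
        (v * lam ^ δ * lam + (κ * v⁻¹ ^ ε) ^ a * (lam ^ (δ - a + 1) / δ))) := by
    rw [hQI]
    calc ENNReal.ofReal (1 + δ) *
        ∫⁻ t in Ioi (0:ℝ), μ ({x | t < w x} ∩ Q) * ENNReal.ofReal (t ^ δ)
        ≤ ENNReal.ofReal (1 + δ) * (μ Q * ENNReal.ofReal (lam ^ δ) * ENNReal.ofReal lam
            + K' ^ a * ENNReal.ofReal (lam ^ (δ - a + 1) / δ)) := mul_le_mul' le_rfl split
      _ = _ := by
          rw [hVv, hKof, ← ENNReal.ofReal_mul hv.le, ← ENNReal.ofReal_mul (by positivity),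
            ENNReal.ofReal_rpow_of_pos (by positivity), ← ENNReal.ofReal_mul (by positivity),
            ← ENNReal.ofReal_add (by positivity) (by positivity),
            ← ENNReal.ofReal_mul (by positivity)]
  -- real-number algebra
  have e2 : (κ * v⁻¹ ^ ε) ^ a * lam ^ (δ - a + 1) = v * lam ^ (1 + δ) := by
    have h₁ : (κ * v⁻¹ ^ ε) ^ a = κ ^ a * v ^ (-(ε * a)) := by
      rw [Real.mul_rpow hκ.le (by positivity), ← Real.rpow_mul (by positivity : (0:ℝ) ≤ v⁻¹),
        Real.inv_rpow hv.le, ← Real.rpow_neg hv.le]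
    have h₂ : ∀ s : ℝ, lam ^ s = κ ^ s * v ^ (-s) := fun s => by
      rw [hlamdef, Real.div_rpow hκ.le hv.le, div_eq_mul_inv, ← Real.rpow_neg hv.le]
    rw [h₁, h₂, h₂]
    have hr : v * (κ ^ (1 + δ) * v ^ (-(1 + δ))) = κ ^ (1 + δ) * v ^ (-(1 + δ) + 1) := by
      rw [Real.rpow_add_one hv.ne']; ring
    rw [hr, mul_mul_mul_comm, ← Real.rpow_add hκ, ← Real.rpow_add hv]
    congr 1
    · congr 1; ring
    · congr 1; rw [ha] at hεa ⊢; linarith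
  have hreal : (1 + δ) * (v * lam ^ δ * lam + (κ * v⁻¹ ^ ε) ^ a * (lam ^ (δ - a + 1) / δ))
      = ((1 + δ) * (1 + 1 / δ)) * (v * lam ^ (1 + δ)) := by
    have e1 : v * lam ^ δ * lam = v * lam ^ (1 + δ) := by
      rw [mul_assoc, ← Real.rpow_add_one hlam0.ne' δ, add_comm δ 1]
    linear_combination (1 + δ) * e1 + ((1 + δ) / δ) * e2
  -- conclude
  have h2 : (μ Q)⁻¹ * ∫⁻ x in Q, ENNReal.ofReal (w x) ^ (1 + δ) ∂μ ≤
      ENNReal.ofReal (((1 + δ) * (1 + 1 / δ)) * lam ^ (1 + δ)) := by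
    calc (μ Q)⁻¹ * ∫⁻ x in Q, ENNReal.ofReal (w x) ^ (1 + δ) ∂μ
        ≤ (μ Q)⁻¹ * ENNReal.ofReal (((1 + δ) * (1 + 1 / δ)) * (v * lam ^ (1 + δ))) :=
          mul_le_mul' le_rfl (hbound.trans_eq (by rw [hreal]))
      _ = ENNReal.ofReal (((1 + δ) * (1 + 1 / δ)) * lam ^ (1 + δ)) := by
          rw [hVv, ← ENNReal.ofReal_inv_of_pos hv, ← ENNReal.ofReal_mul (by positivity)]
          congr 1
          field_simp
  calc ((μ Q)⁻¹ * ∫⁻ x in Q, ENNReal.ofReal (w x) ^ (1 + δ) ∂μ) ^ (1 / (1 + δ))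
      ≤ (ENNReal.ofReal (((1 + δ) * (1 + 1 / δ)) * lam ^ (1 + δ))) ^ (1 / (1 + δ)) :=
        ENNReal.rpow_le_rpow h2 (by positivity)
    _ = ENNReal.ofReal ((((1 + δ) * (1 + 1 / δ)) * lam ^ (1 + δ)) ^ (1 / (1 + δ))) :=
        ENNReal.ofReal_rpow_of_pos (by positivity)
    _ = ENNReal.ofReal (((1 + δ) * (1 + 1 / δ)) ^ (1 / (1 + δ))) * K * (μ Q)⁻¹ := by
        rw [Real.mul_rpow (by positivity) (by positivity), ← Real.rpow_mul hlam0.le,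
          mul_one_div_cancel (show (1:ℝ) + δ ≠ 0 by positivity), Real.rpow_one,
          ENNReal.ofReal_mul (by positivity), hlamdef,
          ENNReal.ofReal_div_of_pos hv, ← hKκ, ← hVv, ENNReal.div_eq_inv_mul]
        ring


/-- **Reverse Hölder characterization of `C_p`.** A weight belongs to `C_p`
(i.e. satisfies `w(E) ≤ C (|E|/|Q|)^ε ∫ (Mχ_Q)^p w`) iff it satisfies the weak
reverse Hölder inequality `(⨍_Q w^(1+δ))^(1/(1+δ)) ≤ (C/|Q|) ∫ (Mχ_Q)^p w`. -/
theorem statement1 (n : ℕ) (hn : 1 ≤ n) (p : ℝ) (hp : 1 < p)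
    (w : (Fin n → ℝ) → ℝ) (hw : ∀ x, 0 ≤ w x) (hloc : LocallyIntegrable w volume) :
    (∃ C > (0 : ℝ), ∃ ε > (0 : ℝ), ∀ (c : Fin n → ℝ) (r : ℝ), 0 < r →
        ∀ E ⊆ closedBall c r, MeasurableSet E →
          ∫⁻ x in E, ENNReal.ofReal (w x) ≤
            ENNReal.ofReal C * (volume E / volume (closedBall c r)) ^ ε *
              cpTail n p w (closedBall c r)) ↔
    (∃ C > (0 : ℝ), ∃ δ > (0 : ℝ), ∀ (c : Fin n → ℝ) (r : ℝ), 0 < r →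
        ((volume (closedBall c r))⁻¹ *
            ∫⁻ x in closedBall c r, ENNReal.ofReal (w x) ^ (1 + δ)) ^ (1 / (1 + δ)) ≤
          ENNReal.ofReal C * (volume (closedBall c r))⁻¹ *
            cpTail n p w (closedBall c r)) := by
  have hum : AEMeasurable w volume := hloc.aestronglyMeasurable.aemeasurable
  constructor
  · rintro ⟨C, hC, ε, hε, h⟩
    have hε'0 : 0 < min ε 2⁻¹ := lt_min hε (by norm_num)
    have hε'1 : min ε 2⁻¹ < 1 := lt_of_le_of_lt (min_le_right _ _) (by norm_num)
    set ε' := min ε 2⁻¹ with hε'def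
    have h1ε : 0 < 1 - ε' := by linarith
    have hδ : 0 < ε' / (2 * (1 - ε')) := by positivity
    refine ⟨(((1 + ε' / (2 * (1 - ε'))) * (1 + 1 / (ε' / (2 * (1 - ε'))))) ^
        (1 / (1 + ε' / (2 * (1 - ε'))))) * C, by positivity,
      ε' / (2 * (1 - ε')), hδ, fun c r hr => ?_⟩
    have hQm : MeasurableSet (closedBall c r) :=
      (measurableSet_closedBall : MeasurableSet (closedBall c r))
    have hV0 : volume (closedBall c r) ≠ 0 := (measure_closedBall_pos volume c hr).ne'
    have hVt : volume (closedBall c r) ≠ ∞ := (isCompact_closedBall c r).measure_lt_top.ne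
    rcases eq_or_ne (cpTail n p w (closedBall c r)) ∞ with hTt | hTt
    · rw [hTt]
      rw [ENNReal.mul_top (mul_ne_zero (ENNReal.ofReal_pos.mpr (by positivity)).ne'
        (ENNReal.inv_ne_zero.mpr hVt))]
      exact le_top
    rcases eq_or_ne (cpTail n p w (closedBall c r)) 0 with hT0 | hT0
    · have h0 : ∫⁻ x in closedBall c r, ENNReal.ofReal (w x) = 0 := by
        refine le_antisymm ?_ (zero_le)
        have := h c r hr (closedBall c r) subset_rfl hQm
        rwa [hT0, mul_zero] at this
      have hae : ∀ᵐ x ∂(volume.restrict (closedBall c r)), ENNReal.ofReal (w x) = 0 :=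
        (lintegral_eq_zero_iff'
          ((ENNReal.measurable_ofReal.comp_aemeasurable hum).restrict)).1 h0
      have h1 : ∫⁻ x in closedBall c r,
          ENNReal.ofReal (w x) ^ (1 + ε' / (2 * (1 - ε'))) = 0 := by
        rw [lintegral_congr_ae (hae.mono fun x hx => by
          rw [hx, ENNReal.zero_rpow_of_pos (by positivity)]), lintegral_zero]
      rw [h1, mul_zero, ENNReal.zero_rpow_of_pos (by positivity)]
      exact zero_le
    -- main case: apply the core lemma to a measurable representative of `w`
    have hK0 : ENNReal.ofReal C * cpTail n p w (closedBall c r) ≠ 0 :=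
      mul_ne_zero (ENNReal.ofReal_pos.2 hC).ne' hT0
    have hKt : ENNReal.ofReal C * cpTail n p w (closedBall c r) ≠ ∞ :=
      ENNReal.mul_ne_top ENNReal.ofReal_ne_top hTt
    have hg : Measurable (fun x => max (hum.mk w x) 0) :=
      hum.measurable_mk.max measurable_const
    have hg0 : ∀ x, 0 ≤ max (hum.mk w x) 0 := fun x => le_max_right _ _
    have hwg : w =ᵐ[volume] (fun x => max (hum.mk w x) 0) :=
      hum.ae_eq_mk.mono fun x hx => by
        simp only [← hx]; exact (max_eq_left (hw x)).symm
    have h' : ∀ E, E ⊆ closedBall c r → MeasurableSet E →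
        ∫⁻ x in E, ENNReal.ofReal (max (hum.mk w x) 0) ≤
          (ENNReal.ofReal C * cpTail n p w (closedBall c r)) *
            (volume E / volume (closedBall c r)) ^ ε' := by
      intro E hEQ hEm
      have heq : ∫⁻ x in E, ENNReal.ofReal (max (hum.mk w x) 0) =
          ∫⁻ x in E, ENNReal.ofReal (w x) :=
        lintegral_congr_ae (ae_restrict_of_ae (hwg.mono fun x hx => by simp only [hx]))
      rw [heq]
      calc ∫⁻ x in E, ENNReal.ofReal (w x)
          ≤ ENNReal.ofReal C * (volume E / volume (closedBall c r)) ^ ε *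
              cpTail n p w (closedBall c r) := h c r hr E hEQ hEm
        _ ≤ ENNReal.ofReal C * (volume E / volume (closedBall c r)) ^ ε' *
              cpTail n p w (closedBall c r) := by
            refine mul_le_mul' (mul_le_mul' le_rfl ?_) le_rfl
            refine ENNReal.rpow_le_rpow_of_exponent_ge ?_ (min_le_left _ _)
            exact ENNReal.div_le_of_le_mul
              ((measure_mono hEQ).trans (le_of_eq (one_mul _).symm))
        _ = _ := by ring
    have main := rh_core volume hQm hg0 hg hV0 hVt hK0 hKt hε'0 hε'1 h'
    have heq2 : ∫⁻ x in closedBall c r,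
        ENNReal.ofReal (max (hum.mk w x) 0) ^ (1 + ε' / (2 * (1 - ε'))) =
          ∫⁻ x in closedBall c r, ENNReal.ofReal (w x) ^ (1 + ε' / (2 * (1 - ε'))) :=
      lintegral_congr_ae (ae_restrict_of_ae (hwg.mono fun x hx => by simp only [hx]))
    rw [heq2] at main
    refine main.trans (le_of_eq ?_)
    rw [ENNReal.ofReal_mul (by positivity)]
    ring
  · rintro ⟨C, hC, δ, hδ, h⟩
    refine ⟨C, hC, δ / (1 + δ), by positivity, fun c r hr E hEQ hEm => ?_⟩
    have hV0 : volume (closedBall c r) ≠ 0 := (measure_closedBall_pos volume c hr).ne'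
    have hVt : volume (closedBall c r) ≠ ∞ := (isCompact_closedBall c r).measure_lt_top.ne
    rcases eq_or_ne (volume E) 0 with hE0 | hE0
    · rw [setLIntegral_measure_zero _ _ hE0]
      exact zero_le
    rcases eq_or_ne (cpTail n p w (closedBall c r)) ∞ with hTt | hTt
    · have hx0 : volume E / volume (closedBall c r) ≠ 0 := by
        simp [ENNReal.div_eq_zero_iff, hE0, hVt]
      rw [hTt, ENNReal.mul_top (mul_ne_zero (ENNReal.ofReal_pos.2 hC).ne' (by
        simp only [ne_eq, ENNReal.rpow_eq_zero_iff, not_or, not_and, not_lt]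
        exact ⟨fun h' => absurd h' hx0, fun _ => by positivity⟩))]
      exact le_top
    have hRH := h c r hr
    have hIQt : (∫⁻ x in closedBall c r, ENNReal.ofReal (w x) ^ (1 + δ)) ≠ ∞ := by
      intro hcon
      have hLt : ((volume (closedBall c r))⁻¹ *
          ∫⁻ x in closedBall c r, ENNReal.ofReal (w x) ^ (1 + δ)) ^ (1 / (1 + δ)) = ∞ := by
        rw [hcon, ENNReal.mul_top (ENNReal.inv_ne_zero.2 hVt),
          ENNReal.top_rpow_of_pos (by positivity)]
      rw [hLt] at hRH
      exact (ENNReal.mul_ne_top (ENNReal.mul_ne_top ENNReal.ofReal_ne_top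
        (ENNReal.inv_ne_top.2 hV0)) hTt) (top_le_iff.1 hRH)
    -- Hölder inequality on E
    have hconj : Real.HolderConjugate (1 + δ) ((1 + δ) / δ) := by
      refine Real.holderConjugate_iff.mpr ⟨?_, ?_⟩
      · linarith
      · field_simp
    have hWm : AEMeasurable (fun x => ENNReal.ofReal (w x)) (volume.restrict E) :=
      (ENNReal.measurable_ofReal.comp_aemeasurable hum).restrict
    have hold := ENNReal.lintegral_mul_le_Lp_mul_Lq (volume.restrict E) hconj hWm
      (aemeasurable_const (b := (1:ℝ≥0∞)))
    simp only [Pi.mul_apply, mul_one, ENNReal.one_rpow, lintegral_one,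
      Measure.restrict_apply_univ] at hold
    have hH : ∫⁻ x in E, ENNReal.ofReal (w x) ≤
        (∫⁻ x in closedBall c r, ENNReal.ofReal (w x) ^ (1 + δ)) ^ (1 / (1 + δ)) *
          (volume E) ^ (δ / (1 + δ)) := by
      refine hold.trans ?_
      rw [one_div_div]
      gcongr
    -- rescale
    set v := (volume (closedBall c r)).toReal with hvdef
    have hv : 0 < v := ENNReal.toReal_pos hV0 hVt
    have hVv : volume (closedBall c r) = ENNReal.ofReal v := (ENNReal.ofReal_toReal hVt).symm
    have hVinv : (volume (closedBall c r)) ^ (1 / (1 + δ)) * (volume (closedBall c r))⁻¹ =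
        ((volume (closedBall c r)) ^ (δ / (1 + δ)))⁻¹ := by
      rw [hVv, ENNReal.ofReal_rpow_of_pos hv, ENNReal.ofReal_rpow_of_pos hv,
        ← ENNReal.ofReal_inv_of_pos hv, ← ENNReal.ofReal_inv_of_pos (by positivity),
        ← ENNReal.ofReal_mul (by positivity)]
      congr 1
      rw [← Real.rpow_neg_one v, ← Real.rpow_add hv, ← Real.rpow_neg hv.le]
      congr 1
      field_simp
      ring
    calc ∫⁻ x in E, ENNReal.ofReal (w x)
        ≤ (∫⁻ x in closedBall c r, ENNReal.ofReal (w x) ^ (1 + δ)) ^ (1 / (1 + δ)) *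
            (volume E) ^ (δ / (1 + δ)) := hH
      _ = (volume (closedBall c r) * ((volume (closedBall c r))⁻¹ *
            ∫⁻ x in closedBall c r, ENNReal.ofReal (w x) ^ (1 + δ))) ^ (1 / (1 + δ)) *
            (volume E) ^ (δ / (1 + δ)) := by
          rw [← mul_assoc, ENNReal.mul_inv_cancel hV0 hVt, one_mul]
      _ ≤ ((volume (closedBall c r)) ^ (1 / (1 + δ)) *
            (ENNReal.ofReal C * (volume (closedBall c r))⁻¹ *
              cpTail n p w (closedBall c r))) * (volume E) ^ (δ / (1 + δ)) := by
          rw [ENNReal.mul_rpow_of_ne_top hVt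
            (ENNReal.mul_ne_top (ENNReal.inv_ne_top.2 hV0) hIQt)]
          exact mul_le_mul' (mul_le_mul' le_rfl hRH) le_rfl
      _ = ENNReal.ofReal C * (volume E / volume (closedBall c r)) ^ (δ / (1 + δ)) *
            cpTail n p w (closedBall c r) := by
          rw [ENNReal.div_rpow_of_nonneg _ _ (by positivity), ENNReal.div_eq_inv_mul,
            ← hVinv]
          ring

end
end

section
/- Let $n \ge 1$. For every $R \ge 1$ there is a constant $C = C(n, R)$ such that for every nonempty open set $\Omega \subsetneq \mathbb{R}^n$, there exists a countable family of pairwise disjoint cubes $\{Q_j\}$ with $\Omega = \bigcup_j Q_j$, such that for every $j$, $5R \le \frac{\operatorname{dist}(Q_j, \mathbb{R}^n \setminus \Omega)}{\operatorname{diam}(Q_j)} \le 15R$, and moreover $\sum_j \chi_{R Q_j}(x) \le C \, \chi_\Omega(x)$ for every $x \in \mathbb{R}^n$. -/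
open MeasureTheory ENNReal Metric Set Filter

noncomputable section

/-- Euclidean distance on `Fin n → ℝ` (the ambient sup metric is used for cubes). -/
def eucDist {n : ℕ} (x y : Fin n → ℝ) : ℝ := Real.sqrt (∑ i, (x i - y i) ^ 2)

/-- Euclidean diameter of a set. -/
def eucDiam {n : ℕ} (s : Set (Fin n → ℝ)) : ℝ :=
  sSup {d | ∃ a ∈ s, ∃ b ∈ s, d = eucDist a b}

/-- Euclidean distance between two sets. -/
def eucSetDist {n : ℕ} (s t : Set (Fin n → ℝ)) : ℝ :=
  sInf {d | ∃ a ∈ s, ∃ b ∈ t, d = eucDist a b}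

/-- Half-open axis-parallel cube with center `c` and side length `2r`
(half-open so that pairwise disjoint cubes can tile an open set). -/
def hCube {n : ℕ} (c : Fin n → ℝ) (r : ℝ) : Set (Fin n → ℝ) :=
  {x | ∀ i, c i - r ≤ x i ∧ x i < c i + r}

namespace WhitneyAux

variable {n : ℕ}

lemma eucDist_nonneg (x y : Fin n → ℝ) : 0 ≤ eucDist x y := Real.sqrt_nonneg _

lemma eucDist_self (x : Fin n → ℝ) : eucDist x x = 0 := by
  simp [eucDist]

lemma eucDist_comm (x y : Fin n → ℝ) : eucDist x y = eucDist y x := by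
  unfold eucDist; congr 1; exact Finset.sum_congr rfl fun i _ => by ring

lemma eucDist_eq_dist (x y : Fin n → ℝ) :
    eucDist x y = dist ((WithLp.equiv 2 (Fin n → ℝ)).symm x)
      ((WithLp.equiv 2 (Fin n → ℝ)).symm y) := by
  rw [EuclideanSpace.dist_eq]
  unfold eucDist
  congr 1
  refine Finset.sum_congr rfl fun i _ => ?_
  show (x i - y i) ^ 2 = dist (x i) (y i) ^ 2
  rw [Real.dist_eq, sq_abs]

lemma eucDist_triangle (x y z : Fin n → ℝ) : eucDist x z ≤ eucDist x y + eucDist y z := by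
  simp only [eucDist_eq_dist]; exact dist_triangle _ _ _

lemma eucDist_le (x y : Fin n → ℝ) {s : ℝ} (hs : 0 ≤ s) (h : ∀ i, |x i - y i| ≤ s) :
    eucDist x y ≤ Real.sqrt n * s := by
  have h1 : (∑ i, (x i - y i)^2) ≤ ∑ _i : Fin n, s^2 :=
    Finset.sum_le_sum fun i _ => by
      rw [← sq_abs]; exact pow_le_pow_left₀ (abs_nonneg _) (h i) 2
  calc eucDist x y ≤ Real.sqrt (∑ _i : Fin n, s^2) := Real.sqrt_le_sqrt h1
  _ = Real.sqrt n * s := by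
      rw [Finset.sum_const, Finset.card_univ, Fintype.card_fin, nsmul_eq_mul,
        Real.sqrt_mul (by positivity), Real.sqrt_sq hs]

lemma abs_le_eucDist (x y : Fin n → ℝ) (i : Fin n) : |x i - y i| ≤ eucDist x y := by
  rw [← Real.sqrt_sq_eq_abs]
  exact Real.sqrt_le_sqrt (Finset.single_le_sum (f := fun j => (x j - y j)^2)
    (fun j _ => sq_nonneg _) (Finset.mem_univ i))

/-! ### set distance -/

lemma bddBelow_distSet (s t : Set (Fin n → ℝ)) :
    BddBelow {d | ∃ a ∈ s, ∃ b ∈ t, d = eucDist a b} := by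
  refine ⟨0, ?_⟩
  rintro d ⟨a, -, b, -, rfl⟩
  exact eucDist_nonneg a b

lemma eucSetDist_le {s t : Set (Fin n → ℝ)} {a b : Fin n → ℝ} (ha : a ∈ s) (hb : b ∈ t) :
    eucSetDist s t ≤ eucDist a b :=
  csInf_le (bddBelow_distSet s t) ⟨a, ha, b, hb, rfl⟩

lemma le_eucSetDist {s t : Set (Fin n → ℝ)} (hs : s.Nonempty) (ht : t.Nonempty) {d : ℝ}
    (h : ∀ a ∈ s, ∀ b ∈ t, d ≤ eucDist a b) : d ≤ eucSetDist s t := by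
  obtain ⟨a0, ha0⟩ := hs
  obtain ⟨b0, hb0⟩ := ht
  have hne : {d | ∃ a ∈ s, ∃ b ∈ t, d = eucDist a b}.Nonempty :=
    ⟨eucDist a0 b0, a0, ha0, b0, hb0, rfl⟩
  refine le_csInf hne ?_
  rintro e ⟨a, ha, b, hb, rfl⟩
  exact h a ha b hb

lemma eucSetDist_nonneg {s t : Set (Fin n → ℝ)} (hs : s.Nonempty) (ht : t.Nonempty) :
    0 ≤ eucSetDist s t :=
  le_eucSetDist hs ht fun a _ b _ => eucDist_nonneg a b

lemma exists_eucDist_lt {s t : Set (Fin n → ℝ)} (hs : s.Nonempty) (ht : t.Nonempty) {d : ℝ}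
    (h : eucSetDist s t < d) : ∃ a ∈ s, ∃ b ∈ t, eucDist a b < d := by
  obtain ⟨a0, ha0⟩ := hs
  obtain ⟨b0, hb0⟩ := ht
  have hne : {d | ∃ a ∈ s, ∃ b ∈ t, d = eucDist a b}.Nonempty :=
    ⟨eucDist a0 b0, a0, ha0, b0, hb0, rfl⟩
  obtain ⟨e, ⟨a, ha, b, hb, rfl⟩, hlt⟩ := exists_lt_of_csInf_lt hne h
  exact ⟨a, ha, b, hb, hlt⟩

lemma eucSetDist_mono_left {s s' t : Set (Fin n → ℝ)} (hs' : s'.Nonempty) (ht : t.Nonempty)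
    (hsub : s' ⊆ s) : eucSetDist s t ≤ eucSetDist s' t :=
  le_eucSetDist hs' ht fun a ha b hb => eucSetDist_le (hsub ha) hb

/-! ### diameter -/

lemma eucDiam_le {s : Set (Fin n → ℝ)} (hs : s.Nonempty) {d : ℝ}
    (h : ∀ a ∈ s, ∀ b ∈ s, eucDist a b ≤ d) : eucDiam s ≤ d := by
  obtain ⟨a, ha⟩ := hs
  refine csSup_le ⟨eucDist a a, a, ha, a, ha, rfl⟩ ?_
  rintro e ⟨u, hu, v, hv, rfl⟩
  exact h u hu v hv

lemma le_eucDiam {s : Set (Fin n → ℝ)} {d : ℝ} (hbdd : ∀ a ∈ s, ∀ b ∈ s, eucDist a b ≤ d)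
    {a b : Fin n → ℝ} (ha : a ∈ s) (hb : b ∈ s) : eucDist a b ≤ eucDiam s := by
  refine le_csSup ⟨d, ?_⟩ ⟨a, ha, b, hb, rfl⟩
  rintro e ⟨u, hu, v, hv, rfl⟩
  exact hbdd u hu v hv

/-! ### cubes -/

lemma center_mem_hCube {c : Fin n → ℝ} {r : ℝ} (hr : 0 < r) : c ∈ hCube c r :=
  fun i => ⟨by linarith, by linarith⟩

lemma abs_sub_le_of_mem_hCube {c x y : Fin n → ℝ} {r : ℝ} (hx : x ∈ hCube c r)
    (hy : y ∈ hCube c r) (i : Fin n) : |x i - y i| ≤ 2 * r := by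
  obtain ⟨h1, h2⟩ := hx i
  obtain ⟨h3, h4⟩ := hy i
  rw [abs_le]; constructor <;> linarith

lemma abs_sub_center_le_of_mem_hCube {c x : Fin n → ℝ} {r : ℝ} (hx : x ∈ hCube c r)
    (i : Fin n) : |x i - c i| ≤ r := by
  obtain ⟨h1, h2⟩ := hx i
  rw [abs_le]; constructor <;> linarith

lemma eucDist_le_of_mem_hCube {c x y : Fin n → ℝ} {r : ℝ} (hr : 0 ≤ r) (hx : x ∈ hCube c r)
    (hy : y ∈ hCube c r) : eucDist x y ≤ Real.sqrt n * (2 * r) :=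
  eucDist_le x y (by linarith) (abs_sub_le_of_mem_hCube hx hy)

lemma hCube_eq_pi (c : Fin n → ℝ) (r : ℝ) :
    hCube c r = Set.pi univ fun i => Ico (c i - r) (c i + r) := by
  ext x; simp [hCube, Set.mem_pi, Set.mem_Ico]

lemma measurableSet_hCube (c : Fin n → ℝ) (r : ℝ) : MeasurableSet (hCube c r) := by
  rw [hCube_eq_pi]
  exact MeasurableSet.univ_pi fun i => measurableSet_Ico

lemma volume_hCube (c : Fin n → ℝ) {r : ℝ} (hr : 0 ≤ r) :
    volume (hCube c r) = ENNReal.ofReal ((2 * r) ^ n) := by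
  rw [hCube_eq_pi, volume_pi_pi]
  have : ∀ i : Fin n, volume (Ico (c i - r) (c i + r)) = ENNReal.ofReal (2 * r) := by
    intro i; rw [Real.volume_Ico]; congr 1; ring
  simp only [this, Finset.prod_const, Finset.card_univ, Fintype.card_fin]
  rw [ENNReal.ofReal_pow (by linarith)]

lemma sqrt_n_ge_one (hn : 1 ≤ n) : 1 ≤ Real.sqrt n := by
  rw [Real.one_le_sqrt]; exact_mod_cast hn

lemma eucDiam_hCube (hn : 1 ≤ n) (c : Fin n → ℝ) {r : ℝ} (hr : 0 < r) :
    eucDiam (hCube c r) = Real.sqrt n * (2 * r) := by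
  have hne : (hCube c r).Nonempty := ⟨c, center_mem_hCube hr⟩
  have hub : ∀ a ∈ hCube c r, ∀ b ∈ hCube c r, eucDist a b ≤ Real.sqrt n * (2*r) :=
    fun a ha b hb => eucDist_le_of_mem_hCube hr.le ha hb
  refine le_antisymm (eucDiam_le hne hub) ?_
  have hsn : (0:ℝ) < Real.sqrt n := lt_of_lt_of_le one_pos (sqrt_n_ge_one hn)
  have key : ∀ ε : ℝ, 0 < ε → ε ≤ 2*r → Real.sqrt n * (2*r - ε) ≤ eucDiam (hCube c r) := by
    intro ε hε hε2
    set a : Fin n → ℝ := fun i => c i - r with ha_def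
    set b : Fin n → ℝ := fun i => c i + r - ε with hb_def
    have ha : a ∈ hCube c r := fun i => ⟨le_refl _, by simp [ha_def]; linarith⟩
    have hb : b ∈ hCube c r := fun i => ⟨by simp [hb_def]; linarith, by simp [hb_def]; linarith⟩
    have hd : eucDist a b = Real.sqrt n * (2*r - ε) := by
      unfold eucDist
      have : ∀ i : Fin n, (a i - b i)^2 = (2*r - ε)^2 := by
        intro i; simp only [ha_def, hb_def]; ring
      simp only [this, Finset.sum_const, Finset.card_univ, Fintype.card_fin, nsmul_eq_mul]
      rw [Real.sqrt_mul (by positivity), Real.sqrt_sq (by linarith)]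
    rw [← hd]
    exact le_eucDiam hub ha hb
  by_contra hcon
  push_neg at hcon
  set D := eucDiam (hCube c r) with hD
  have hD0 : 0 ≤ D := by
    have := le_eucDiam hub (center_mem_hCube hr) (center_mem_hCube hr)
    rw [eucDist_self] at this; exact this
  set ε := (Real.sqrt n * (2*r) - D) / (2 * Real.sqrt n) with hε_def
  have hεpos : 0 < ε := by
    apply div_pos; linarith; linarith
  have hεle : ε ≤ 2*r := by
    rw [hε_def, div_le_iff₀ (by linarith)]
    nlinarith [sqrt_n_ge_one hn]
  have := key ε hεpos hεle
  have hexp : Real.sqrt n * (2*r - ε) = Real.sqrt n * (2*r) - (Real.sqrt n * (2*r) - D)/2 := by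
    rw [hε_def]; field_simp
  rw [hexp] at this
  linarith

/-! ### dyadic cubes -/

def sc (k : ℤ) : ℝ := 2 ^ k

lemma sc_pos (k : ℤ) : 0 < sc k := zpow_pos (by norm_num) k

lemma sc_half (k : ℤ) : sc (k - 1) + sc (k - 1) = sc k := by
  unfold sc
  rw [zpow_sub_one₀ (by norm_num : (2:ℝ) ≠ 0)]
  ring

lemma sc_mono {j k : ℤ} (h : j ≤ k) : sc j ≤ sc k :=
  zpow_le_zpow_right₀ (by norm_num) h

lemma sc_add_one (k : ℤ) : sc (k + 1) = 2 * sc k := by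
  unfold sc
  rw [zpow_add_one₀ (by norm_num : (2:ℝ) ≠ 0)]
  ring

def fl {n : ℕ} (k : ℤ) (x : Fin n → ℝ) : Fin n → ℤ := fun i => ⌊x i / sc k⌋

def dctr {n : ℕ} (k : ℤ) (m : Fin n → ℤ) : Fin n → ℝ := fun i => (m i : ℝ) * sc k + sc (k - 1)

def dQ {n : ℕ} (k : ℤ) (m : Fin n → ℤ) : Set (Fin n → ℝ) := hCube (dctr k m) (sc (k - 1))

lemma mem_dQ {k : ℤ} {m : Fin n → ℤ} {x : Fin n → ℝ} :
    x ∈ dQ k m ↔ ∀ i, (m i : ℝ) * sc k ≤ x i ∧ x i < ((m i : ℝ) + 1) * sc k := by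
  have h2 : sc (k - 1) + sc (k - 1) = sc k := sc_half k
  unfold dQ hCube dctr
  simp only [Set.mem_setOf_eq]
  refine forall_congr' fun i => ?_
  constructor <;> (rintro ⟨ha, hb⟩; constructor <;> nlinarith)

lemma mem_dQ_iff_fl {k : ℤ} {m : Fin n → ℤ} {x : Fin n → ℝ} :
    x ∈ dQ k m ↔ fl k x = m := by
  rw [mem_dQ, funext_iff]
  refine forall_congr' fun i => ?_
  rw [show fl k x i = ⌊x i / sc k⌋ from rfl, Int.floor_eq_iff]
  have hp := sc_pos k
  constructor
  · rintro ⟨h1, h2⟩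
    constructor
    · rw [le_div_iff₀ hp]; exact h1
    · rw [div_lt_iff₀ hp]; linarith [h2]
  · rintro ⟨h1, h2⟩
    constructor
    · rw [le_div_iff₀ hp] at h1; exact h1
    · rw [div_lt_iff₀ hp] at h2; linarith [h2]

lemma mem_dQ_self (k : ℤ) (x : Fin n → ℝ) : x ∈ dQ k (fl k x) := mem_dQ_iff_fl.2 rfl

lemma dQ_step (k : ℤ) (x : Fin n → ℝ) : dQ k (fl k x) ⊆ dQ (k + 1) (fl (k + 1) x) := by
  intro z hz
  rw [mem_dQ] at hz ⊢
  intro i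
  obtain ⟨h1, h2⟩ := hz i
  have hpk := sc_pos k
  have hsc2 : sc (k + 1) = 2 * sc k := sc_add_one k
  have hdiv : x i / sc (k + 1) = x i / sc k / 2 := by rw [hsc2, div_div, mul_comm]
  have hp1 : ((fl (k+1) x i : ℝ)) ≤ x i / sc (k + 1) := Int.floor_le _
  have hp2 : x i / sc (k + 1) < (fl (k+1) x i : ℝ) + 1 := Int.lt_floor_add_one _
  rw [hdiv] at hp1 hp2
  have h2p : (2 * fl (k+1) x i : ℤ) ≤ fl k x i := by
    apply Int.le_floor.2
    push_cast
    nlinarith [Int.floor_le (x i / sc k), Int.lt_floor_add_one (x i / sc k)]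
  have hm : fl k x i < 2 * fl (k+1) x i + 2 := by
    apply Int.floor_lt.2
    push_cast
    nlinarith
  have h2p' : ((2 * fl (k+1) x i : ℤ) : ℝ) ≤ (fl k x i : ℝ) := by exact_mod_cast h2p
  have hm' : ((fl k x i : ℝ) + 1) ≤ ((2 * fl (k+1) x i : ℤ) : ℝ) + 2 := by
    have : (fl k x i : ℤ) + 1 ≤ 2 * fl (k+1) x i + 2 := by omega
    exact_mod_cast this
  push_cast at h2p' hm'
  have e1 : (2 * (fl (k+1) x i : ℝ)) * sc k ≤ (fl k x i : ℝ) * sc k :=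
    mul_le_mul_of_nonneg_right h2p' hpk.le
  have e2 : ((fl k x i : ℝ) + 1) * sc k ≤ (2 * (fl (k+1) x i : ℝ) + 2) * sc k :=
    mul_le_mul_of_nonneg_right hm' hpk.le
  rw [hsc2]
  constructor
  · nlinarith
  · nlinarith

lemma dQ_nested' (x : Fin n → ℝ) (j : ℤ) : ∀ d : ℕ, dQ j (fl j x) ⊆ dQ (j + d) (fl (j + d) x)
  | 0 => by simp
  | (d+1) => by
    have h1 := dQ_nested' x j d
    have h2 := dQ_step (j + d) x
    have : (j + (↑(d+1)) : ℤ) = (j + d) + 1 := by push_cast; ring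
    rw [this]
    exact h1.trans h2

lemma dQ_nested {j k : ℤ} (h : j ≤ k) (x : Fin n → ℝ) : dQ j (fl j x) ⊆ dQ k (fl k x) := by
  obtain ⟨d, rfl⟩ : ∃ d : ℕ, k = j + d := ⟨(k - j).toNat, by omega⟩
  exact dQ_nested' x j d
/-! ### Whitney selection -/

def Pd (n : ℕ) (R : ℝ) (Ω : Set (Fin n → ℝ)) (k : ℤ) (m : Fin n → ℤ) : Prop :=
  5 * R * (Real.sqrt n * sc k) ≤ eucSetDist (dQ k m) Ωᶜ

def delta {n : ℕ} (Ω : Set (Fin n → ℝ)) (x : Fin n → ℝ) : ℝ := eucSetDist {x} Ωᶜ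

variable {R : ℝ} {Ω : Set (Fin n → ℝ)}

lemma delta_le {x b : Fin n → ℝ} (hb : b ∈ Ωᶜ) : delta Ω x ≤ eucDist x b :=
  eucSetDist_le rfl hb

lemma le_delta (hc : Ωᶜ.Nonempty) {x : Fin n → ℝ} {d : ℝ}
    (h : ∀ b ∈ Ωᶜ, d ≤ eucDist x b) : d ≤ delta Ω x := by
  unfold delta
  exact le_eucSetDist (Set.singleton_nonempty x) hc fun a ha b hb => by
    rw [Set.mem_singleton_iff] at ha; subst ha; exact h b hb

lemma delta_pos (hΩ : IsOpen Ω) (hc : Ωᶜ.Nonempty) {x : Fin n → ℝ} (hx : x ∈ Ω) :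
    0 < delta Ω x := by
  obtain ⟨ε, hε, hball⟩ := Metric.isOpen_iff.1 hΩ x hx
  refine lt_of_lt_of_le hε (le_delta hc fun b hb => ?_)
  by_contra hlt
  push_neg at hlt
  have hco : ∀ i, dist (x i) (b i) < ε := fun i =>
    lt_of_le_of_lt (by rw [Real.dist_eq]; exact abs_le_eucDist x b i) hlt
  have : b ∈ ball x ε := by
    rw [mem_ball, dist_comm]
    exact (dist_pi_lt_iff hε).2 hco
  exact hb (hball this)

lemma dist_dQ_le_delta (hc : Ωᶜ.Nonempty) {k : ℤ} {m : Fin n → ℤ} {x : Fin n → ℝ}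
    (hx : x ∈ dQ k m) : eucSetDist (dQ k m) Ωᶜ ≤ delta Ω x := by
  unfold delta
  exact le_eucSetDist (Set.singleton_nonempty x) hc fun a ha b hb => by
    rw [Set.mem_singleton_iff] at ha; subst ha; exact eucSetDist_le hx hb

lemma two_sc (k : ℤ) : 2 * sc (k - 1) = sc k := by
  rw [two_mul]; exact sc_half k

lemma eucDist_le_of_mem_dQ {k : ℤ} {m : Fin n → ℤ} {x y : Fin n → ℝ}
    (hx : x ∈ dQ k m) (hy : y ∈ dQ k m) : eucDist x y ≤ Real.sqrt n * sc k := by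
  have := eucDist_le_of_mem_hCube (c := dctr k m) (sc_pos (k-1)).le hx hy
  rwa [two_sc] at this

lemma exists_Pd_small (hn : 1 ≤ n) (hR : 1 ≤ R) (hΩ : IsOpen Ω) (hc : Ωᶜ.Nonempty)
    {x : Fin n → ℝ} (hx : x ∈ Ω) : ∃ k : ℤ, Pd n R Ω k (fl k x) := by
  have hδ := delta_pos hΩ hc hx
  have hsn := sqrt_n_ge_one hn
  have hsn0 : (0:ℝ) < Real.sqrt n := by linarith
  have hden : (0:ℝ) < (5*R+1) * Real.sqrt n := by nlinarith
  obtain ⟨N, hN⟩ := exists_pow_lt_of_lt_one (x := delta Ω x / ((5*R+1) * Real.sqrt n))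
    (y := (1/2:ℝ)) (div_pos hδ hden) (by norm_num)
  refine ⟨-N, ?_⟩
  have hsc : sc (-N) = (1/2:ℝ)^N := by
    unfold sc
    rw [zpow_neg, ← zpow_natCast]
    simp [one_div, inv_zpow]
  have key : (5*R+1) * (Real.sqrt n * sc (-N)) ≤ delta Ω x := by
    rw [hsc]
    rw [lt_div_iff₀ hden] at hN
    nlinarith
  have hQne : (dQ (-N : ℤ) (fl (-N) x)).Nonempty := ⟨x, mem_dQ_self _ _⟩
  refine le_eucSetDist hQne hc fun a ha b hb => ?_
  have t1 : delta Ω x ≤ eucDist x b := delta_le hb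
  have t2 : eucDist x a ≤ Real.sqrt n * sc (-N) := eucDist_le_of_mem_dQ (mem_dQ_self _ _) ha
  have t3 : eucDist x b ≤ eucDist x a + eucDist a b := eucDist_triangle x a b
  linarith

lemma bdd_Pd (hn : 1 ≤ n) (hR : 1 ≤ R) (hc : Ωᶜ.Nonempty) {x : Fin n → ℝ} :
    ∃ b : ℤ, ∀ k : ℤ, Pd n R Ω k (fl k x) → k ≤ b := by
  have hsn := sqrt_n_ge_one hn
  set M := delta Ω x / (5 * R * Real.sqrt n) with hM
  refine ⟨max 0 ⌈M⌉, fun k hk => ?_⟩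
  have hdist := dist_dQ_le_delta hc (mem_dQ_self k x)
  have hsck : sc k ≤ M := by
    rw [hM, le_div_iff₀ (by nlinarith)]
    unfold Pd at hk
    nlinarith
  rcases le_or_gt k 0 with hk0 | hk0
  · exact le_trans hk0 (le_max_left _ _)
  · have hkn : sc k = (2:ℝ) ^ k.toNat := by
      unfold sc
      rw [← zpow_natCast, Int.toNat_of_nonneg hk0.le]
    have hlt : (k.toNat : ℝ) < sc k := by
      rw [hkn]; exact_mod_cast (Nat.lt_two_pow_self (n := k.toNat))
    have hkr : (k : ℝ) ≤ M := by
      have h1 : (k : ℝ) = (k.toNat : ℝ) := by exact_mod_cast (Int.toNat_of_nonneg hk0.le).symm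
      linarith
    have : k ≤ ⌈M⌉ := by
      have h2 : (k:ℝ) ≤ (⌈M⌉:ℝ) := hkr.trans (Int.le_ceil M)
      exact_mod_cast h2
    exact le_trans this (le_max_right _ _)

def Wset (n : ℕ) (R : ℝ) (Ω : Set (Fin n → ℝ)) : Set (ℤ × (Fin n → ℤ)) :=
  {p | ∃ x ∈ Ω, Pd n R Ω p.1 (fl p.1 x) ∧ (∀ j, Pd n R Ω j (fl j x) → j ≤ p.1) ∧ p.2 = fl p.1 x}

lemma W_cover (hn : 1 ≤ n) (hR : 1 ≤ R) (hΩ : IsOpen Ω) (hc : Ωᶜ.Nonempty)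
    {x : Fin n → ℝ} (hx : x ∈ Ω) : ∃ p ∈ Wset n R Ω, x ∈ dQ p.1 p.2 := by
  obtain ⟨k, hk1, hk2⟩ := Int.exists_greatest_of_bdd (bdd_Pd hn hR hc (x := x))
    (exists_Pd_small hn hR hΩ hc hx)
  exact ⟨(k, fl k x), ⟨x, hx, hk1, hk2, rfl⟩, mem_dQ_self k x⟩

lemma W_Pd {p : ℤ × (Fin n → ℤ)} (hp : p ∈ Wset n R Ω) : Pd n R Ω p.1 p.2 := by
  obtain ⟨x, -, h2, -, h4⟩ := hp
  rw [h4]; exact h2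

lemma W_notPd_succ {p : ℤ × (Fin n → ℤ)} (hp : p ∈ Wset n R Ω) {y : Fin n → ℝ}
    (hy : y ∈ dQ p.1 p.2) : ¬ Pd n R Ω (p.1 + 1) (fl (p.1 + 1) y) := by
  obtain ⟨x, -, h2, h3, h4⟩ := hp
  rw [h4] at hy
  have hy' : y ∈ dQ (p.1 + 1) (fl (p.1 + 1) x) := dQ_step p.1 x hy
  have : fl (p.1 + 1) y = fl (p.1 + 1) x := mem_dQ_iff_fl.1 hy'
  rw [this]
  intro hP
  exact absurd (h3 _ hP) (by omega)

lemma W_pos (hn : 1 ≤ n) (hR : 1 ≤ R) {k : ℤ} : 0 < 5 * R * (Real.sqrt n * sc k) := by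
  have h1 := sc_pos k
  have h2 : (0:ℝ) < Real.sqrt n := lt_of_lt_of_le one_pos (sqrt_n_ge_one hn)
  exact mul_pos (by linarith) (mul_pos h2 h1)

lemma W_subset_Omega (hn : 1 ≤ n) (hR : 1 ≤ R) {p : ℤ × (Fin n → ℤ)}
    (hp : p ∈ Wset n R Ω) : dQ p.1 p.2 ⊆ Ω := by
  intro z hz
  by_contra hzc
  have h0 : eucSetDist (dQ p.1 p.2) Ωᶜ ≤ 0 := by
    have := eucSetDist_le hz (Set.mem_compl hzc)
    rwa [eucDist_self] at this
  have := W_Pd hp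
  unfold Pd at this
  linarith [W_pos (R := R) hn hR (k := p.1)]

lemma Pd_descend (hn : 1 ≤ n) (hR : 1 ≤ R) (hc : Ωᶜ.Nonempty) {j k : ℤ} (hjk : j ≤ k)
    {y : Fin n → ℝ} (h : Pd n R Ω k (fl k y)) : Pd n R Ω j (fl j y) := by
  have hsub := dQ_nested hjk y
  have hmono : eucSetDist (dQ k (fl k y)) Ωᶜ ≤ eucSetDist (dQ j (fl j y)) Ωᶜ :=
    eucSetDist_mono_left ⟨y, mem_dQ_self _ _⟩ hc hsub
  unfold Pd at h ⊢
  have hsc := sc_mono hjk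
  have hsn := sqrt_n_ge_one hn
  have h5 : (0:ℝ) ≤ 5 * R * Real.sqrt n := by nlinarith
  have h6 : 5 * R * Real.sqrt n * sc j ≤ 5 * R * Real.sqrt n * sc k :=
    mul_le_mul_of_nonneg_left hsc h5
  nlinarith

lemma W_disjoint_aux (hn : 1 ≤ n) (hR : 1 ≤ R) (hc : Ωᶜ.Nonempty)
    {p q : ℤ × (Fin n → ℤ)} (hp : p ∈ Wset n R Ω) (hq : q ∈ Wset n R Ω)
    (hlt : p.1 < q.1) {y : Fin n → ℝ} (hyp : y ∈ dQ p.1 p.2) (hyq : y ∈ dQ q.1 q.2) :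
    False := by
  have hq2 : fl q.1 y = q.2 := mem_dQ_iff_fl.1 hyq
  have hPdq : Pd n R Ω q.1 (fl q.1 y) := by rw [hq2]; exact W_Pd hq
  have hPd1 : Pd n R Ω (p.1 + 1) (fl (p.1 + 1) y) := Pd_descend hn hR hc (by omega) hPdq
  exact W_notPd_succ hp hyp hPd1

lemma W_disjoint (hn : 1 ≤ n) (hR : 1 ≤ R) (hc : Ωᶜ.Nonempty)
    {p q : ℤ × (Fin n → ℤ)} (hp : p ∈ Wset n R Ω) (hq : q ∈ Wset n R Ω) (hpq : p ≠ q) :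
    Disjoint (dQ p.1 p.2) (dQ q.1 q.2) := by
  rw [Set.disjoint_left]
  intro y hyp hyq
  rcases lt_trichotomy p.1 q.1 with h | h | h
  · exact W_disjoint_aux hn hR hc hp hq h hyp hyq
  · apply hpq
    have h2 : p.2 = q.2 := by
      have e1 : fl p.1 y = p.2 := mem_dQ_iff_fl.1 hyp
      have e2 : fl q.1 y = q.2 := mem_dQ_iff_fl.1 hyq
      rw [← e1, ← e2, h]
    exact Prod.ext h h2
  · exact W_disjoint_aux hn hR hc hq hp h hyq hyp

lemma W_dist_le (hn : 1 ≤ n) (hR : 1 ≤ R) (hc : Ωᶜ.Nonempty) {p : ℤ × (Fin n → ℤ)}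
    (hp : p ∈ Wset n R Ω) :
    eucSetDist (dQ p.1 p.2) Ωᶜ ≤ 12 * R * (Real.sqrt n * sc p.1) := by
  obtain ⟨x, hxΩ, h2, h3, h4⟩ := hp
  have hxQ : x ∈ dQ p.1 p.2 := by rw [h4]; exact mem_dQ_self _ _
  have notP : ¬ Pd n R Ω (p.1 + 1) (fl (p.1 + 1) x) := fun h => absurd (h3 _ h) (by omega)
  unfold Pd at notP
  push_neg at notP
  have claim : eucSetDist (dQ p.1 p.2) Ωᶜ ≤
      eucSetDist (dQ (p.1+1) (fl (p.1+1) x)) Ωᶜ + Real.sqrt n * sc (p.1+1) := by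
    apply _root_.le_of_forall_pos_le_add
    intro ε hε
    have hlt : eucSetDist (dQ (p.1+1) (fl (p.1+1) x)) Ωᶜ <
        eucSetDist (dQ (p.1+1) (fl (p.1+1) x)) Ωᶜ + ε := by linarith
    obtain ⟨a, ha, b, hb, hab⟩ := exists_eucDist_lt ⟨x, mem_dQ_self _ _⟩ hc hlt
    have hxa : eucDist x a ≤ Real.sqrt n * sc (p.1+1) :=
      eucDist_le_of_mem_dQ (mem_dQ_self _ _) ha
    have h5 : eucSetDist (dQ p.1 p.2) Ωᶜ ≤ eucDist x b := eucSetDist_le hxQ hb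
    have h6 : eucDist x b ≤ eucDist x a + eucDist a b := eucDist_triangle x a b
    linarith
  have hsc1 : sc (p.1 + 1) = 2 * sc p.1 := sc_add_one p.1
  have hsn := sqrt_n_ge_one hn
  have hsn0 : (0:ℝ) < Real.sqrt n := by linarith
  have hscp := sc_pos p.1
  rw [hsc1] at claim notP
  nlinarith [mul_nonneg (mul_nonneg (sub_nonneg.2 hR) hsn0.le) hscp.le]

lemma W_lt (hn : 1 ≤ n) (hR : 1 ≤ R) (hΩ : IsOpen Ω) (hne : Ω.Nonempty) (hc : Ωᶜ.Nonempty)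
    (K : ℤ) : ∃ p ∈ Wset n R Ω, p.1 < K := by
  have hfr : (frontier Ω).Nonempty := by
    rcases eq_empty_or_nonempty (frontier Ω) with h | h
    · have : IsClopen Ω := isClopen_iff_frontier_eq_empty.2 h
      rcases isClopen_iff.1 this with rfl | rfl
      · simp at hne
      · simp at hc
    · exact h
  obtain ⟨b, hbf⟩ := hfr
  have hbcl : b ∈ closure Ω := hbf.1
  have hsn := sqrt_n_ge_one hn
  have hsn0 : (0:ℝ) < Real.sqrt n := by linarith
  have hεp : (0:ℝ) < 5 * R * sc K := by have := sc_pos K; nlinarith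
  obtain ⟨y, hyΩ, hyb⟩ := Metric.mem_closure_iff.1 hbcl _ hεp
  have hb' : b ∈ Ωᶜ := fun hbΩ => hbf.2 (by rwa [IsOpen.interior_eq hΩ])
  have hδy : delta Ω y < 5 * R * (Real.sqrt n * sc K) := by
    have h1 : delta Ω y ≤ eucDist y b := delta_le hb'
    have h2 : eucDist y b ≤ Real.sqrt n * dist y b :=
      eucDist_le y b dist_nonneg fun i => by
        rw [← Real.dist_eq]; exact dist_le_pi_dist y b i
    have h3 : dist y b < 5 * R * sc K := by rwa [dist_comm] at hyb
    have h4 : Real.sqrt n * dist y b < Real.sqrt n * (5 * R * sc K) :=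
      mul_lt_mul_of_pos_left h3 hsn0
    nlinarith
  obtain ⟨p, hp, hyp⟩ := W_cover hn hR hΩ hc hyΩ
  refine ⟨p, hp, ?_⟩
  have hPd := W_Pd hp
  unfold Pd at hPd
  have hdle := dist_dQ_le_delta hc hyp
  have hscs : sc p.1 < sc K := by
    have h5 : 5 * R * (Real.sqrt n * sc p.1) < 5 * R * (Real.sqrt n * sc K) := by linarith
    have hR5 : (0:ℝ) < 5 * R * Real.sqrt n := by nlinarith
    nlinarith
  exact (zpow_lt_zpow_iff_right₀ (by norm_num : (1:ℝ) < 2)).1 hscs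

lemma W_infinite (hn : 1 ≤ n) (hR : 1 ≤ R) (hΩ : IsOpen Ω) (hne : Ω.Nonempty)
    (hc : Ωᶜ.Nonempty) : (Wset n R Ω).Infinite := by
  by_contra h
  rw [Set.not_infinite] at h
  obtain ⟨p0, hp0, -⟩ := W_lt hn hR hΩ hne hc 0
  have hTne : (h.toFinset.image Prod.fst).Nonempty :=
    ⟨p0.1, Finset.mem_image.2 ⟨p0, h.mem_toFinset.2 hp0, rfl⟩⟩
  set K := (h.toFinset.image Prod.fst).min' hTne with hK
  obtain ⟨p, hp, hlt⟩ := W_lt hn hR hΩ hne hc K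
  have : K ≤ p.1 := Finset.min'_le _ _ (Finset.mem_image.2 ⟨p, h.mem_toFinset.2 hp, rfl⟩)
  omega
/-! ### dilated cubes -/

lemma eucDist_center_dilate (hR : 1 ≤ R) {c : Fin n → ℝ} {r : ℝ} (hr : 0 < r)
    {x : Fin n → ℝ} (hx : x ∈ hCube c (R * r)) : eucDist c x ≤ Real.sqrt n * (R * r) :=
  eucDist_le c x (by nlinarith) fun i => by
    rw [abs_sub_comm]; exact abs_sub_center_le_of_mem_hCube hx i

lemma dilate_sub_Omega (hn : 1 ≤ n) (hR : 1 ≤ R) (hc : Ωᶜ.Nonempty) {p : ℤ × (Fin n → ℤ)}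
    (hp : p ∈ Wset n R Ω) {x : Fin n → ℝ}
    (hx : x ∈ hCube (dctr p.1 p.2) (R * sc (p.1 - 1))) : x ∈ Ω := by
  by_contra hxc
  have hctr : dctr p.1 p.2 ∈ dQ p.1 p.2 := center_mem_hCube (sc_pos _)
  have h1 : eucSetDist (dQ p.1 p.2) Ωᶜ ≤ eucDist (dctr p.1 p.2) x :=
    eucSetDist_le hctr (Set.mem_compl hxc)
  have h2 : eucDist (dctr p.1 p.2) x ≤ Real.sqrt n * (R * sc (p.1 - 1)) :=
    eucDist_center_dilate hR (sc_pos _) hx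
  have hPd := W_Pd hp
  unfold Pd at hPd
  have h3 : sc p.1 = 2 * sc (p.1 - 1) := (two_sc p.1).symm
  have hsn := sqrt_n_ge_one hn
  have hsr := sc_pos (p.1 - 1)
  rw [h3] at hPd
  nlinarith [mul_pos (mul_pos (lt_of_lt_of_le one_pos hR) (lt_of_lt_of_le one_pos hsn)) hsr]

lemma dilate_r_upper (hn : 1 ≤ n) (hR : 1 ≤ R) (hc : Ωᶜ.Nonempty) {p : ℤ × (Fin n → ℤ)}
    (hp : p ∈ Wset n R Ω) {x : Fin n → ℝ}
    (hx : x ∈ hCube (dctr p.1 p.2) (R * sc (p.1 - 1))) :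
    9 * R * (Real.sqrt n * sc (p.1 - 1)) ≤ delta Ω x := by
  have hctr : dctr p.1 p.2 ∈ dQ p.1 p.2 := center_mem_hCube (sc_pos _)
  have h2 : eucDist (dctr p.1 p.2) x ≤ Real.sqrt n * (R * sc (p.1 - 1)) :=
    eucDist_center_dilate hR (sc_pos _) hx
  have hPd := W_Pd hp
  unfold Pd at hPd
  have h3 : sc p.1 = 2 * sc (p.1 - 1) := (two_sc p.1).symm
  rw [h3] at hPd
  refine le_delta hc fun b hb => ?_
  have h4 : eucSetDist (dQ p.1 p.2) Ωᶜ ≤ eucDist (dctr p.1 p.2) b := eucSetDist_le hctr hb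
  have h5 : eucDist (dctr p.1 p.2) b ≤ eucDist (dctr p.1 p.2) x + eucDist x b :=
    eucDist_triangle _ x b
  linarith

lemma dilate_r_lower (hn : 1 ≤ n) (hR : 1 ≤ R) (hc : Ωᶜ.Nonempty) {p : ℤ × (Fin n → ℤ)}
    (hp : p ∈ Wset n R Ω) {x : Fin n → ℝ}
    (hx : x ∈ hCube (dctr p.1 p.2) (R * sc (p.1 - 1))) :
    delta Ω x ≤ 27 * R * (Real.sqrt n * sc (p.1 - 1)) := by
  have hctr : dctr p.1 p.2 ∈ dQ p.1 p.2 := center_mem_hCube (sc_pos _)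
  have h2 : eucDist (dctr p.1 p.2) x ≤ Real.sqrt n * (R * sc (p.1 - 1)) :=
    eucDist_center_dilate hR (sc_pos _) hx
  have hdist := W_dist_le hn hR hc hp
  have h3 : sc p.1 = 2 * sc (p.1 - 1) := (two_sc p.1).symm
  rw [h3] at hdist
  have hsn := sqrt_n_ge_one hn
  have hsr := sc_pos (p.1 - 1)
  have key : delta Ω x ≤ eucSetDist (dQ p.1 p.2) Ωᶜ +
      (Real.sqrt n * (R * sc (p.1-1)) + Real.sqrt n * (2 * sc (p.1-1))) := by
    apply _root_.le_of_forall_pos_le_add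
    intro ε hε
    have hlt : eucSetDist (dQ p.1 p.2) Ωᶜ < eucSetDist (dQ p.1 p.2) Ωᶜ + ε := by linarith
    obtain ⟨a, ha, b, hb, hab⟩ := exists_eucDist_lt ⟨_, hctr⟩ hc hlt
    have h6 : delta Ω x ≤ eucDist x b := delta_le hb
    have h7 : eucDist x b ≤ eucDist x (dctr p.1 p.2) + eucDist (dctr p.1 p.2) a + eucDist a b := by
      have t1 := eucDist_triangle x (dctr p.1 p.2) b
      have t2 := eucDist_triangle (dctr p.1 p.2) a b
      linarith
    have h8 : eucDist (dctr p.1 p.2) a ≤ Real.sqrt n * sc p.1 := eucDist_le_of_mem_dQ hctr ha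
    rw [h3] at h8
    have h9 : eucDist x (dctr p.1 p.2) = eucDist (dctr p.1 p.2) x := eucDist_comm _ _
    linarith
  have hRpos : (0:ℝ) < R := lt_of_lt_of_le one_pos hR
  nlinarith [mul_nonneg (mul_nonneg hRpos.le (by linarith : (0:ℝ) ≤ Real.sqrt n)) hsr.le]

lemma dilate_sub_Icc (hR : 1 ≤ R) {p : ℤ × (Fin n → ℤ)} {x : Fin n → ℝ}
    (hx : x ∈ hCube (dctr p.1 p.2) (R * sc (p.1 - 1))) {ρ : ℝ}
    (hρ : (R + 1) * sc (p.1 - 1) ≤ ρ) :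
    dQ p.1 p.2 ⊆ Set.pi univ fun i => Icc (x i - ρ) (x i + ρ) := by
  intro y hy
  rw [Set.mem_pi]
  intro i _
  have h1 : |y i - dctr p.1 p.2 i| ≤ sc (p.1 - 1) := abs_sub_center_le_of_mem_hCube hy i
  have h2 : |x i - dctr p.1 p.2 i| ≤ R * sc (p.1 - 1) := abs_sub_center_le_of_mem_hCube hx i
  rw [abs_le] at h1 h2
  rw [Set.mem_Icc]
  constructor <;> linarith [h1.1, h1.2, h2.1, h2.2]

lemma volume_Icc_cube (x : Fin n → ℝ) {ρ : ℝ} (hρ : 0 ≤ ρ) :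
    volume (Set.pi univ fun i => Icc (x i - ρ) (x i + ρ)) = ENNReal.ofReal ((2 * ρ) ^ n) := by
  rw [volume_pi_pi]
  have : ∀ i : Fin n, volume (Icc (x i - ρ) (x i + ρ)) = ENNReal.ofReal (2 * ρ) := by
    intro i; rw [Real.volume_Icc]; congr 1; ring
  simp only [this, Finset.prod_const, Finset.card_univ, Fintype.card_fin]
  rw [ENNReal.ofReal_pow (by linarith)]
lemma card_bound (hn : 1 ≤ n) (hR : 1 ≤ R) (hΩ : IsOpen Ω) (hc : Ωᶜ.Nonempty)
    {x : Fin n → ℝ} (hx : x ∈ Ω) (S : Finset (ℤ × (Fin n → ℤ)))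
    (hSW : ∀ p ∈ S, p ∈ Wset n R Ω)
    (hSx : ∀ p ∈ S, x ∈ hCube (dctr p.1 p.2) (R * sc (p.1 - 1))) :
    (S.card : ℝ≥0∞) ≤ ENNReal.ofReal ((4 * (R + 1)) ^ n) := by
  have hδ : 0 < delta Ω x := delta_pos hΩ hc hx
  set δ := delta Ω x with hδdef
  have hsn : 1 ≤ Real.sqrt n := sqrt_n_ge_one hn
  have hsn0 : (0:ℝ) < Real.sqrt n := by linarith
  have hR0 : (0:ℝ) < R := lt_of_lt_of_le one_pos hR
  set A := δ / (27 * R * Real.sqrt n) with hA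
  set ρ := (R + 1) * (δ / (9 * R * Real.sqrt n)) with hρ
  have hA0 : 0 < A := by apply div_pos hδ; nlinarith
  have hρ0 : 0 < ρ := by
    apply _root_.mul_pos (by linarith : (0:ℝ) < R + 1)
    apply div_pos hδ; nlinarith
  have hAr : ∀ p ∈ S, A ≤ sc (p.1 - 1) := by
    intro p hp
    have h1 := dilate_r_lower hn hR hc (hSW p hp) (hSx p hp)
    rw [hA, div_le_iff₀ (by nlinarith : (0:ℝ) < 27 * R * Real.sqrt n)]
    rw [← hδdef] at h1
    nlinarith
  have hsub : ∀ p ∈ S, dQ p.1 p.2 ⊆ Set.pi univ fun i => Icc (x i - ρ) (x i + ρ) := by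
    intro p hp
    refine dilate_sub_Icc hR (hSx p hp) ?_
    have h2 := dilate_r_upper hn hR hc (hSW p hp) (hSx p hp)
    rw [← hδdef] at h2
    have h3 : sc (p.1 - 1) ≤ δ / (9 * R * Real.sqrt n) := by
      rw [le_div_iff₀ (by nlinarith : (0:ℝ) < 9 * R * Real.sqrt n)]
      nlinarith
    rw [hρ]
    nlinarith [sc_pos (p.1 - 1)]
  have hvol : ∀ p ∈ S, ENNReal.ofReal ((2 * A) ^ n) ≤ volume (dQ p.1 p.2) := by
    intro p hp
    rw [show dQ p.1 p.2 = hCube (dctr p.1 p.2) (sc (p.1 - 1)) from rfl,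
      volume_hCube _ (sc_pos _).le]
    apply ENNReal.ofReal_le_ofReal
    apply pow_le_pow_left₀ (by linarith)
    linarith [hAr p hp]
  have hdisj : (↑S : Set (ℤ × (Fin n → ℤ))).PairwiseDisjoint fun p => dQ p.1 p.2 := by
    intro p hp q hq hpq
    exact W_disjoint hn hR hc (hSW p (Finset.mem_coe.1 hp)) (hSW q (Finset.mem_coe.1 hq)) hpq
  have hmeas : ∀ p ∈ S, MeasurableSet (dQ p.1 p.2) := fun p _ => measurableSet_hCube _ _
  have key : (S.card : ℝ≥0∞) * ENNReal.ofReal ((2 * A) ^ n) ≤ ENNReal.ofReal ((2 * ρ) ^ n) := by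
    calc (S.card : ℝ≥0∞) * ENNReal.ofReal ((2 * A) ^ n)
        = S.card • ENNReal.ofReal ((2 * A) ^ n) := by rw [nsmul_eq_mul]
      _ ≤ ∑ p ∈ S, volume (dQ p.1 p.2) := Finset.card_nsmul_le_sum S _ _ hvol
      _ = volume (⋃ p ∈ S, dQ p.1 p.2) := (measure_biUnion_finset hdisj hmeas).symm
      _ ≤ volume (Set.pi univ fun i => Icc (x i - ρ) (x i + ρ)) :=
          measure_mono (Set.iUnion₂_subset hsub)
      _ = ENNReal.ofReal ((2 * ρ) ^ n) := volume_Icc_cube x hρ0.le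
  have h2A0 : (0:ℝ) < (2 * A) ^ n := pow_pos (by linarith) n
  have hne0 : ENNReal.ofReal ((2 * A) ^ n) ≠ 0 := by
    simp only [ne_eq, ENNReal.ofReal_eq_zero, not_le]; exact h2A0
  have hcard : (S.card : ℝ≥0∞) ≤ ENNReal.ofReal ((2 * ρ) ^ n) / ENNReal.ofReal ((2 * A) ^ n) :=
    (ENNReal.le_div_iff_mul_le (Or.inl hne0) (Or.inl ENNReal.ofReal_ne_top)).2 key
  rw [← ENNReal.ofReal_div_of_pos h2A0] at hcard
  refine hcard.trans (ENNReal.ofReal_le_ofReal ?_)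
  have hratio : (2 * ρ) ^ n / (2 * A) ^ n = (3 * (R + 1)) ^ n := by
    rw [← div_pow]
    congr 1
    rw [hρ, hA]
    field_simp
    ring
  rw [hratio]
  apply pow_le_pow_left₀ (by linarith)
  linarith
end WhitneyAux

open WhitneyAux in
/-- **Whitney covering lemma with parameter `R`.** For every `R ≥ 1` there is
`C = C(n,R)` such that every nonempty proper open set `Ω ⊆ ℝⁿ` can be written as a
disjoint union of (half-open) cubes `Q_j` with
`5R ≤ dist(Q_j, ℝⁿ∖Ω)/diam(Q_j) ≤ 15R` and `∑_j χ_{RQ_j} ≤ C χ_Ω`. -/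
theorem statement14 (n : ℕ) (hn : 1 ≤ n) (R : ℝ) (hR : 1 ≤ R) :
    ∃ C > (0 : ℝ),
      ∀ Ω : Set (Fin n → ℝ), IsOpen Ω → Ω.Nonempty → Ω ≠ Set.univ →
        ∃ (cj : ℕ → Fin n → ℝ) (rj : ℕ → ℝ),
          (∀ j, 0 < rj j) ∧
          (Pairwise fun i j => Disjoint (hCube (cj i) (rj i)) (hCube (cj j) (rj j))) ∧
          Ω = ⋃ j, hCube (cj j) (rj j) ∧
          (∀ j, 5 * R ≤ eucSetDist (hCube (cj j) (rj j)) Ωᶜ / eucDiam (hCube (cj j) (rj j)) ∧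
            eucSetDist (hCube (cj j) (rj j)) Ωᶜ / eucDiam (hCube (cj j) (rj j)) ≤ 15 * R) ∧
          (∀ x, ∑' j : ℕ, (hCube (cj j) (R * rj j)).indicator (1 : (Fin n → ℝ) → ℝ≥0∞) x ≤
            ENNReal.ofReal C * Ω.indicator 1 x) := by
  classical
  have hC0 : (0:ℝ) < (4 * (R + 1)) ^ n := pow_pos (by linarith) n
  refine ⟨(4 * (R + 1)) ^ n, hC0, ?_⟩
  intro Ω hΩ hne hproper
  have hc : Ωᶜ.Nonempty := Set.nonempty_compl.2 hproper
  have hWcnt : (Wset n R Ω).Countable := Set.to_countable _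
  have hWinf : (Wset n R Ω).Infinite := W_infinite hn hR hΩ hne hc
  haveI := hWcnt.to_subtype
  haveI : Infinite (Wset n R Ω) := hWinf.to_subtype
  haveI : Encodable (Wset n R Ω) := Encodable.ofCountable _
  haveI : Denumerable (Wset n R Ω) := Denumerable.ofEncodableOfInfinite _
  let e : ℕ ≃ (Wset n R Ω) := (Denumerable.eqv (Wset n R Ω)).symm
  have hinj : Function.Injective (fun j : ℕ => ((e j) : ℤ × (Fin n → ℤ))) :=
    fun a b h => e.injective (Subtype.ext h)
  refine ⟨fun j => dctr (e j).1.1 (e j).1.2, fun j => sc ((e j).1.1 - 1),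
    fun j => sc_pos _, ?_, ?_, ?_, ?_⟩
  · -- pairwise disjoint
    intro i j hij
    have hne' : ((e i) : ℤ × (Fin n → ℤ)) ≠ ((e j) : ℤ × (Fin n → ℤ)) :=
      fun h => hij (e.injective (Subtype.ext h))
    exact W_disjoint hn hR hc (e i).2 (e j).2 hne'
  · -- union
    ext z
    simp only [Set.mem_iUnion]
    constructor
    · intro hz
      obtain ⟨p, hp, hzp⟩ := W_cover hn hR hΩ hc hz
      refine ⟨e.symm ⟨p, hp⟩, ?_⟩
      show z ∈ dQ (e (e.symm ⟨p, hp⟩)).1.1 (e (e.symm ⟨p, hp⟩)).1.2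
      rw [Equiv.apply_symm_apply]
      exact hzp
    · rintro ⟨j, hj⟩
      exact W_subset_Omega hn hR (e j).2 hj
  · -- distance/diameter ratio
    intro j
    show 5 * R ≤ eucSetDist (dQ (e j).1.1 (e j).1.2) Ωᶜ /
        eucDiam (hCube (dctr (e j).1.1 (e j).1.2) (sc ((e j).1.1 - 1))) ∧
      eucSetDist (dQ (e j).1.1 (e j).1.2) Ωᶜ /
        eucDiam (hCube (dctr (e j).1.1 (e j).1.2) (sc ((e j).1.1 - 1))) ≤ 15 * R
    have hp : ((e j) : ℤ × (Fin n → ℤ)) ∈ Wset n R Ω := (e j).2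
    have hsn : 1 ≤ Real.sqrt n := sqrt_n_ge_one hn
    have hpos : 0 < Real.sqrt n * sc (e j).1.1 :=
      mul_pos (by linarith) (sc_pos _)
    have hdiam : eucDiam (hCube (dctr (e j).1.1 (e j).1.2) (sc ((e j).1.1 - 1)))
        = Real.sqrt n * sc (e j).1.1 := by
      rw [eucDiam_hCube hn _ (sc_pos _), two_sc]
    have hlo := W_Pd hp
    unfold Pd at hlo
    have hhi := W_dist_le hn hR hc hp
    constructor
    · rw [hdiam, le_div_iff₀ hpos]
      linarith
    · rw [hdiam, div_le_iff₀ hpos]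
      nlinarith [mul_nonneg (by linarith : (0:ℝ) ≤ 3 * R) hpos.le]
  · -- bounded overlap
    intro x
    by_cases hx : x ∈ Ω
    · rw [Set.indicator_of_mem hx, Pi.one_apply, mul_one]
      rw [ENNReal.tsum_eq_iSup_sum]
      refine iSup_le fun F => ?_
      set Pred : ℕ → Prop := fun j =>
        x ∈ hCube (dctr (e j).1.1 (e j).1.2) (R * sc ((e j).1.1 - 1)) with hPred
      have hsum : (∑ j ∈ F,
          (hCube (dctr (e j).1.1 (e j).1.2) (R * sc ((e j).1.1 - 1))).indicator
            (1 : (Fin n → ℝ) → ℝ≥0∞) x) = ((F.filter Pred).card : ℝ≥0∞) := by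
        calc (∑ j ∈ F, (hCube (dctr (e j).1.1 (e j).1.2)
                (R * sc ((e j).1.1 - 1))).indicator (1 : (Fin n → ℝ) → ℝ≥0∞) x)
            = ∑ j ∈ F, if Pred j then (1:ℝ≥0∞) else 0 :=
              Finset.sum_congr rfl fun j _ => by
                rw [Set.indicator_apply]; rfl
          _ = ((F.filter Pred).card : ℝ≥0∞) := by
              rw [Finset.sum_ite, Finset.sum_const, Finset.sum_const_zero, add_zero,
                nsmul_eq_mul, mul_one]
      rw [hsum]
      set T : Finset (ℤ × (Fin n → ℤ)) :=
        (F.filter Pred).image (fun j => ((e j) : ℤ × (Fin n → ℤ))) with hT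
      have hcard : (F.filter Pred).card = T.card := by
        rw [hT, Finset.card_image_of_injective _ hinj]
      rw [hcard]
      refine card_bound hn hR hΩ hc hx T ?_ ?_
      · intro p hp
        obtain ⟨j, hj, rfl⟩ := Finset.mem_image.1 hp
        exact (e j).2
      · intro p hp
        obtain ⟨j, hj, rfl⟩ := Finset.mem_image.1 hp
        exact (Finset.mem_filter.1 hj).2
    · have hterm : ∀ j : ℕ, (hCube (dctr (e j).1.1 (e j).1.2)
          (R * sc ((e j).1.1 - 1))).indicator (1 : (Fin n → ℝ) → ℝ≥0∞) x = 0 := by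
        intro j
        exact Set.indicator_of_notMem
          (fun hmem => hx (dilate_sub_Omega hn hR hc (e j).2 hmem)) _
      calc (∑' j : ℕ, (hCube (dctr (e j).1.1 (e j).1.2)
              (R * sc ((e j).1.1 - 1))).indicator (1 : (Fin n → ℝ) → ℝ≥0∞) x)
          = ∑' _j : ℕ, (0:ℝ≥0∞) := tsum_congr hterm
        _ = 0 := tsum_zero
        _ ≤ _ := zero_le

end
end

section
/- Let $n \ge 1$. There is a constant $C_n > 0$ depending only on $n$ such that the following holds: let $f$ be a locally integrable function on $\mathbb{R}^n$, $k \in \mathbb{Z}$, $N \ge 1$ an integer, and let $P$ be a cube such that there exists a point $z \in \mathbb{R}^n$ with $Mf(z) \le 2^{k-N}$ and $\operatorname{dist}(z, P) \le 15 \operatorname{diam}(P)$. Then $|\{x : Mf(x) > 2^k\} \cap 5P| \le C_n \, 2^{-N} |P|$. -/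
open MeasureTheory ENNReal Metric Set Filter

noncomputable section

/-- The Hardy–Littlewood maximal function of a real-valued function. -/
def mAbs (n : ℕ) (f : (Fin n → ℝ) → ℝ) : (Fin n → ℝ) → ℝ≥0∞ :=
  maxOp n fun y => ENNReal.ofReal |f y|

/-! ### Auxiliary lemmas -/

lemma avg_le_maxOp {n : ℕ} (f : (Fin n → ℝ) → ℝ≥0∞) {c x : Fin n → ℝ} {r : ℝ}
    (hr : 0 < r) (hx : x ∈ closedBall c r) :
    (volume (closedBall c r))⁻¹ * ∫⁻ y in closedBall c r, f y ≤ maxOp n f x :=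
  le_iSup_of_le c (le_iSup_of_le r (le_iSup_of_le hr (le_iSup_of_le hx le_rfl)))

lemma lt_maxOp {n : ℕ} {f : (Fin n → ℝ) → ℝ≥0∞} {x : Fin n → ℝ} {t : ℝ≥0∞}
    (h : t < maxOp n f x) :
    ∃ c r, 0 < r ∧ x ∈ closedBall c r ∧
      t < (volume (closedBall c r))⁻¹ * ∫⁻ y in closedBall c r, f y := by
  unfold maxOp at h
  simp only [lt_iSup_iff] at h
  obtain ⟨c, r, hr, hx, h⟩ := h
  exact ⟨c, r, hr, hx, h⟩

lemma vol_cb {n : ℕ} (c : Fin n → ℝ) {r : ℝ} (hr : 0 ≤ r) :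
    volume (closedBall c r) = ENNReal.ofReal ((2*r)^n) := by
  rw [Real.volume_pi_closedBall c hr, Fintype.card_fin]

lemma vol_cb_pos {n : ℕ} (c : Fin n → ℝ) {r : ℝ} (hr : 0 < r) :
    0 < volume (closedBall c r) := by
  rw [vol_cb c hr.le]; exact ENNReal.ofReal_pos.2 (by positivity)

lemma vol_cb_lt_top {n : ℕ} (c : Fin n → ℝ) {r : ℝ} (hr : 0 ≤ r) :
    volume (closedBall c r) < ⊤ := by
  rw [vol_cb c hr]; exact ENNReal.ofReal_lt_top

lemma integral_le_of_maxOp_le {n : ℕ} {g : (Fin n → ℝ) → ℝ≥0∞} {z c : Fin n → ℝ} {r : ℝ}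
    (hr : 0 < r) (hz : z ∈ closedBall c r) {t : ℝ≥0∞} (h : maxOp n g z ≤ t) :
    ∫⁻ y in closedBall c r, g y ≤ volume (closedBall c r) * t := by
  have h1 : (volume (closedBall c r))⁻¹ * ∫⁻ y in closedBall c r, g y ≤ t :=
    (avg_le_maxOp g hr hz).trans h
  have hv0 : volume (closedBall c r) ≠ 0 := (vol_cb_pos c hr).ne'
  have hvt : volume (closedBall c r) ≠ ⊤ := (vol_cb_lt_top c hr.le).ne
  calc ∫⁻ y in closedBall c r, g y
      = volume (closedBall c r) *
        ((volume (closedBall c r))⁻¹ * ∫⁻ y in closedBall c r, g y) := by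
        rw [← mul_assoc, ENNReal.mul_inv_cancel hv0 hvt, one_mul]
    _ ≤ volume (closedBall c r) * t := mul_le_mul_right h1 _

lemma dist_le_eucDist {n : ℕ} (x y : Fin n → ℝ) : dist x y ≤ eucDist x y := by
  refine (dist_pi_le_iff (Real.sqrt_nonneg _)).2 fun i => ?_
  rw [Real.dist_eq, ← Real.sqrt_sq_eq_abs]
  exact Real.sqrt_le_sqrt (Finset.single_le_sum (f := fun j => (x j - y j)^2)
    (fun j _ => sq_nonneg _) (Finset.mem_univ i))

lemma eucDist_le_of_mem {n : ℕ} {cP : Fin n → ℝ} {rP : ℝ} (hn : 1 ≤ n) (hr : 0 ≤ rP)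
    {a b : Fin n → ℝ} (ha : a ∈ closedBall cP rP) (hb : b ∈ closedBall cP rP) :
    eucDist a b ≤ n * (2 * rP) := by
  have h1 : ∀ i, (a i - b i)^2 ≤ (2*rP)^2 := by
    intro i
    have hai : |a i - cP i| ≤ rP := by
      have := dist_le_pi_dist a cP i
      rw [Real.dist_eq] at this
      exact this.trans (mem_closedBall.1 ha)
    have hbi : |b i - cP i| ≤ rP := by
      have := dist_le_pi_dist b cP i
      rw [Real.dist_eq] at this
      exact this.trans (mem_closedBall.1 hb)
    have : |a i - b i| ≤ 2 * rP := by
      calc |a i - b i| = |(a i - cP i) - (b i - cP i)| := by ring_nf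
        _ ≤ |a i - cP i| + |b i - cP i| := abs_sub _ _
        _ ≤ 2 * rP := by linarith
    calc (a i - b i)^2 = |a i - b i|^2 := (sq_abs _).symm
      _ ≤ (2*rP)^2 := pow_le_pow_left₀ (abs_nonneg _) this 2
  have hsum : (∑ i, (a i - b i)^2) ≤ (n : ℝ) * (2*rP)^2 := by
    calc (∑ i, (a i - b i)^2) ≤ ∑ _i : Fin n, (2*rP)^2 :=
          Finset.sum_le_sum fun i _ => h1 i
      _ = (n : ℝ) * (2*rP)^2 := by simp [Finset.sum_const, mul_comm]
  calc eucDist a b ≤ Real.sqrt ((n:ℝ) * (2*rP)^2) := Real.sqrt_le_sqrt hsum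
    _ = Real.sqrt n * (2*rP) := by
        rw [Real.sqrt_mul (by positivity), Real.sqrt_sq (by positivity)]
    _ ≤ n * (2*rP) := by
        have hs : Real.sqrt n ≤ n := by
          calc Real.sqrt n ≤ Real.sqrt ((n:ℝ)^2) := by
                apply Real.sqrt_le_sqrt
                nlinarith [(Nat.one_le_cast (α := ℝ)).2 hn]
            _ = n := Real.sqrt_sq (by positivity)
        have : (0:ℝ) ≤ 2 * rP := by positivity
        nlinarith [Real.sqrt_nonneg (n:ℝ)]

lemma dist_z_cP {n : ℕ} (hn : 1 ≤ n) {cP z : Fin n → ℝ} {rP : ℝ} (hrP : 0 < rP)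
    (h : eucSetDist {z} (closedBall cP rP) ≤ 15 * eucDiam (closedBall cP rP)) :
    dist z cP ≤ 32 * n * rP := by
  have hmem : cP ∈ closedBall cP rP := mem_closedBall_self hrP.le
  have hdiam : eucDiam (closedBall cP rP) ≤ n * (2 * rP) := by
    apply csSup_le
    · exact ⟨eucDist cP cP, cP, hmem, cP, hmem, rfl⟩
    · rintro d ⟨a, ha, b, hb, rfl⟩
      exact eucDist_le_of_mem hn hrP.le ha hb
  set S := {d | ∃ a ∈ ({z} : Set (Fin n → ℝ)), ∃ b ∈ closedBall cP rP, d = eucDist a b}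
  have hSne : S.Nonempty := ⟨eucDist z cP, z, rfl, cP, hmem, rfl⟩
  have hSbd : BddBelow S := ⟨0, by rintro d ⟨a, _, b, _, rfl⟩; exact Real.sqrt_nonneg _⟩
  have hlt : sInf S < 30 * n * rP + rP := by
    have : (15:ℝ) * eucDiam (closedBall cP rP) ≤ 30 * n * rP := by nlinarith
    have h2 : eucSetDist {z} (closedBall cP rP) = sInf S := rfl
    rw [h2] at h
    have hn1 : (1:ℝ) ≤ n := Nat.one_le_cast.2 hn
    nlinarith
  obtain ⟨d, hdS, hd⟩ := (csInf_lt_iff hSbd hSne).1 hlt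
  obtain ⟨a, ha, p, hp, rfl⟩ := hdS
  rw [mem_singleton_iff] at ha
  rw [← ha]
  have h1 : dist a p ≤ eucDist a p := dist_le_eucDist a p
  have h2 : dist p cP ≤ rP := mem_closedBall.1 hp
  have hn1 : (1:ℝ) ≤ n := Nat.one_le_cast.2 hn
  calc dist a cP ≤ dist a p + dist p cP := dist_triangle _ _ _
    _ ≤ 30 * n * rP + rP + rP := by nlinarith
    _ ≤ 32 * n * rP := by nlinarith

/-- **Claim (17) in Sawyer's Lemma 4.** -/
theorem statement15 (n : ℕ) (hn : 1 ≤ n) :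
    ∃ C > (0 : ℝ),
      ∀ (f : (Fin n → ℝ) → ℝ), LocallyIntegrable f volume →
      ∀ (k : ℤ) (N : ℕ), 1 ≤ N →
      ∀ (cP : Fin n → ℝ) (rP : ℝ), 0 < rP →
      (∃ z : Fin n → ℝ, mAbs n f z ≤ (2 : ℝ≥0∞) ^ (k - (N : ℤ)) ∧
        eucSetDist {z} (closedBall cP rP) ≤ 15 * eucDiam (closedBall cP rP)) →
      volume ({x | (2 : ℝ≥0∞) ^ k < mAbs n f x} ∩ closedBall cP (5 * rP)) ≤
        ENNReal.ofReal (C * 2 ^ (-(N : ℝ))) * volume (closedBall cP rP) := by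
  have hn1 : (1:ℝ) ≤ n := Nat.one_le_cast.2 hn
  refine ⟨(256*(n:ℝ))^n + 25^n, by positivity, ?_⟩
  intro f _hf k N _hN cP rP hrP hex
  obtain ⟨z, hmz, hzd⟩ := hex
  set C : ℝ := (256*(n:ℝ))^n + 25^n with hC
  set g : (Fin n → ℝ) → ℝ≥0∞ := fun y => ENNReal.ofReal |f y| with hgdef
  have hmz' : maxOp n g z ≤ (2:ℝ≥0∞) ^ (k - (N:ℤ)) := hmz
  have hdz : dist z cP ≤ 32 * n * rP := dist_z_cP hn hrP hzd
  have hrexp : (2:ℝ)^(-(N:ℝ)) = ((2:ℝ)^N)⁻¹ := by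
    rw [Real.rpow_neg (by norm_num), Real.rpow_natCast]
  rcases lt_or_ge ((2:ℕ)^N) (5^n) with hsmall | hbig
  · -- trivial small-N case
    have h5 : ((2:ℝ)^N) ≤ 5^n := by exact_mod_cast hsmall.le
    calc volume ({x | (2 : ℝ≥0∞) ^ k < mAbs n f x} ∩ closedBall cP (5 * rP))
        ≤ volume (closedBall cP (5*rP)) := measure_mono inter_subset_right
      _ = ENNReal.ofReal ((2*(5*rP))^n) := vol_cb cP (by positivity)
      _ ≤ ENNReal.ofReal (C * 2^(-(N:ℝ)) * (2*rP)^n) := by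
          apply ENNReal.ofReal_le_ofReal
          rw [show (2*(5*rP)) = 5 * (2*rP) by ring, mul_pow, hrexp]
          have hCge : (5:ℝ)^n ≤ C * ((2:ℝ)^N)⁻¹ := by
            rw [← div_eq_mul_inv, le_div_iff₀ (by positivity)]
            calc (5:ℝ)^n * 2^N ≤ 5^n * 5^n := by
                  have : (0:ℝ) ≤ 5^n := by positivity
                  nlinarith
              _ = 25^n := by rw [← mul_pow]; norm_num
              _ ≤ C := by
                  have : (0:ℝ) ≤ (256*(n:ℝ))^n := by positivity
                  rw [hC]; linarith
          exact mul_le_mul_of_nonneg_right hCge (by positivity)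
      _ ≤ ENNReal.ofReal (C * 2^(-(N:ℝ))) * volume (closedBall cP rP) := by
          rw [vol_cb cP hrP.le, ← ENNReal.ofReal_mul (by positivity)]
  · -- main case
    have hnpos : (0:ℝ) < n := by exact_mod_cast hn
    set E := {x | (2 : ℝ≥0∞) ^ k < mAbs n f x} ∩ closedBall cP (5 * rP) with hE
    have hbig' : (5:ℝ≥0∞)^n ≤ 2^(N:ℕ) := by exact_mod_cast hbig
    have hsel : ∀ a ∈ E, ∃ c r, 0 < r ∧ a ∈ closedBall c r ∧
        closedBall c r ⊆ closedBall cP (32*n*rP) ∧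
        (2:ℝ≥0∞)^k * volume (closedBall c r) < ∫⁻ y in closedBall c r, g y := by
      rintro a ⟨haM, haP⟩
      have haM' : (2:ℝ≥0∞)^k < maxOp n g a := haM
      obtain ⟨c, r, hr, hac, havg⟩ := lt_maxOp haM'
      have hQ0 : volume (closedBall c r) ≠ 0 := (vol_cb_pos c hr).ne'
      have hQt : volume (closedBall c r) ≠ ⊤ := (vol_cb_lt_top c hr.le).ne
      refine ⟨c, r, hr, hac, ?_, ?_⟩
      · by_contra hnot
        obtain ⟨y, hyQ, hyB⟩ := not_subset.1 hnot
        have hyB' : 32*n*rP < dist y cP := by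
          by_contra hle
          exact hyB (mem_closedBall.2 (le_of_not_gt hle))
        have hxc : dist a c ≤ r := mem_closedBall.1 hac
        have hyc : dist y c ≤ r := mem_closedBall.1 hyQ
        have haP' : dist a cP ≤ 5*rP := mem_closedBall.1 haP
        have h2r : 32*n*rP < 2*r + 5*rP := by
          have t1 : dist y cP ≤ dist y c + dist c a + dist a cP := dist_triangle4 _ _ _ _
          have t2 : dist c a = dist a c := dist_comm _ _
          linarith
        set ρ := dist z c + r with hρdef
        have hρpos : 0 < ρ := add_pos_of_nonneg_of_pos dist_nonneg hr
        have hQsub : closedBall c r ⊆ closedBall z ρ := by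
          intro w hw
          rw [mem_closedBall]
          calc dist w z ≤ dist w c + dist c z := dist_triangle _ _ _
            _ ≤ ρ := by rw [hρdef, dist_comm c z]; linarith [mem_closedBall.1 hw]
        have hρ5 : ρ ≤ 5 * r := by
          have hdzc : dist z c ≤ 32*n*rP + 5*rP + r := by
            calc dist z c ≤ dist z cP + dist cP a + dist a c := dist_triangle4 _ _ _ _
              _ ≤ 32*n*rP + 5*rP + r := by rw [dist_comm cP a]; linarith
          rw [hρdef]
          nlinarith
        have havgρ : ∫⁻ y in closedBall z ρ, g y ≤ volume (closedBall z ρ) * 2^(k - (N:ℤ)) :=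
          integral_le_of_maxOp_le hρpos (mem_closedBall_self hρpos.le) hmz'
        have hvolρ : volume (closedBall z ρ) ≤ 5^n * volume (closedBall c r) := by
          calc volume (closedBall z ρ) ≤ volume (closedBall z (5*r)) :=
                measure_mono (closedBall_subset_closedBall hρ5)
            _ = ENNReal.ofReal ((2*(5*r))^n) := vol_cb z (by positivity)
            _ = 5^n * volume (closedBall c r) := by
                rw [vol_cb c hr.le, show (2*(5*r)) = 5*(2*r) by ring, mul_pow,
                  ENNReal.ofReal_mul (by positivity), ENNReal.ofReal_pow (by norm_num)]
                norm_num
        have hfinal : (2:ℝ≥0∞)^k < 2^k := by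
          calc (2:ℝ≥0∞)^k < (volume (closedBall c r))⁻¹ * ∫⁻ y in closedBall c r, g y := havg
            _ ≤ (volume (closedBall c r))⁻¹ * ∫⁻ y in closedBall z ρ, g y :=
                mul_le_mul_right (lintegral_mono_set hQsub) _
            _ ≤ (volume (closedBall c r))⁻¹ * (volume (closedBall z ρ) * 2^(k-(N:ℤ))) :=
                mul_le_mul_right havgρ _
            _ ≤ (volume (closedBall c r))⁻¹ * ((5^n * volume (closedBall c r)) * 2^(k-(N:ℤ))) :=
                mul_le_mul_right (mul_le_mul_left hvolρ _) _
            _ = 5^n * 2^(k-(N:ℤ)) := by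
                rw [show (volume (closedBall c r))⁻¹ *
                      ((5^n * volume (closedBall c r)) * 2^(k-(N:ℤ)))
                    = (volume (closedBall c r))⁻¹ * volume (closedBall c r) *
                      (5^n * 2^(k-(N:ℤ))) by ring,
                  ENNReal.inv_mul_cancel hQ0 hQt, one_mul]
            _ ≤ 2^(N:ℕ) * 2^(k-(N:ℤ)) := mul_le_mul_left hbig' _
            _ = 2^k := by
                rw [← zpow_natCast (2:ℝ≥0∞) N,
                  ← ENNReal.zpow_add two_ne_zero (by norm_num)]
                congr 1
                ring
        exact absurd hfinal (lt_irrefl _)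
      · have h1 : volume (closedBall c r) * (2:ℝ≥0∞)^k <
            volume (closedBall c r) *
              ((volume (closedBall c r))⁻¹ * ∫⁻ y in closedBall c r, g y) :=
          ENNReal.mul_lt_mul_right hQ0 hQt havg
        rw [← mul_assoc, ENNReal.mul_inv_cancel hQ0 hQt, one_mul] at h1
        rwa [mul_comm] at h1
    choose! Qc Qr hQr hQmem hQsub hQint using hsel
    have hRbd : ∀ a ∈ E, Qr a ≤ 2*(32*n*rP) := by
      intro a ha
      have hr := hQr a ha
      have i0 : Fin n := ⟨0, hn⟩
      set p : Fin n → ℝ := Function.update (Qc a) i0 (Qc a i0 + Qr a) with hp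
      have hpQ : p ∈ closedBall (Qc a) (Qr a) := by
        rw [mem_closedBall]
        refine (dist_pi_le_iff hr.le).2 fun i => ?_
        rcases eq_or_ne i i0 with rfl | hne
        · simp [hp, Real.dist_eq, abs_of_nonneg hr.le]
        · simp [hp, Function.update_of_ne hne, Real.dist_eq, hr.le]
      have h1 : dist p cP ≤ 32*n*rP := mem_closedBall.1 (hQsub a ha hpQ)
      have h2 : dist (Qc a) cP ≤ 32*n*rP :=
        mem_closedBall.1 (hQsub a ha (mem_closedBall_self hr.le))
      have h3 : Qr a ≤ dist p (Qc a) := by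
        have hle := dist_le_pi_dist p (Qc a) i0
        have he : dist (p i0) (Qc a i0) = Qr a := by
          simp [hp, Real.dist_eq, abs_of_nonneg hr.le]
        linarith
      have h4 : dist p (Qc a) ≤ dist p cP + dist cP (Qc a) := dist_triangle _ _ _
      rw [dist_comm cP (Qc a)] at h4
      linarith
    obtain ⟨u, huE, hud, hucov⟩ :=
      Vitali.exists_disjoint_subfamily_covering_enlargement_closedBall E Qc Qr
        (2*(32*n*rP)) hRbd 4 (by norm_num)
    have hBfin : volume (closedBall cP (32*n*rP)) ≠ ⊤ :=
      (vol_cb_lt_top cP (by positivity)).ne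
    have hdisj : Pairwise (Function.onFun Disjoint fun b : u => closedBall (Qc b) (Qr b)) := by
      intro b b' hbb
      exact hud b.2 b'.2 (fun h => hbb (Subtype.ext h))
    have hmble : ∀ b : u, MeasurableSet (closedBall (Qc (b : Fin n → ℝ)) (Qr b)) :=
      fun b => measurableSet_closedBall
    have husub : ⋃ b : u, closedBall (Qc b) (Qr b) ⊆ closedBall cP (32*n*rP) :=
      iUnion_subset fun b => hQsub b (huE b.2)
    have hcnt : Countable u := by
      have h1 := MeasureTheory.Measure.countable_meas_pos_of_disjoint_of_meas_iUnion_ne_top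
        (μ := volume) (As := fun b : u => closedBall (Qc b) (Qr b)) hmble hdisj
        (ne_top_of_le_ne_top hBfin (measure_mono husub))
      have h2 : {i : u | 0 < volume (closedBall (Qc (i : Fin n → ℝ)) (Qr i))} = univ :=
        eq_univ_of_forall fun b => vol_cb_pos _ (hQr b (huE b.2))
      rw [h2] at h1
      exact countable_univ_iff.1 h1
    have hB'' : closedBall cP (32*n*rP) ⊆ closedBall z (2*(32*n*rP)) := by
      intro w hw
      rw [mem_closedBall]
      calc dist w z ≤ dist w cP + dist cP z := dist_triangle _ _ _
        _ ≤ 2*(32*n*rP) := by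
            rw [dist_comm cP z]
            have := mem_closedBall.1 hw
            linarith
    have hr'' : (0:ℝ) < 2*(32*n*rP) := by nlinarith
    have hintB : ∫⁻ y in closedBall z (2*(32*n*rP)), g y ≤
        volume (closedBall z (2*(32*n*rP))) * 2^(k-(N:ℤ)) :=
      integral_le_of_maxOp_le hr'' (mem_closedBall_self hr''.le) hmz'
    have h2k0 : ((2:ℝ≥0∞)^k) ≠ 0 := (ENNReal.zpow_pos two_ne_zero (by norm_num) k).ne'
    have h2kt : ((2:ℝ≥0∞)^k) ≠ ⊤ := (ENNReal.zpow_lt_top two_ne_zero (by norm_num) k).ne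
    have hEcov : E ⊆ ⋃ b : u, closedBall (Qc b) (4 * Qr b) := by
      intro a ha
      obtain ⟨b, hb, hsub⟩ := hucov a ha
      exact mem_iUnion.2 ⟨⟨b, hb⟩, hsub (hQmem a ha)⟩
    have hzp : ((2:ℝ≥0∞)^k)⁻¹ * 2^(k-(N:ℤ)) = 2^(-(N:ℤ)) := by
      rw [← ENNReal.zpow_neg,
        ← ENNReal.zpow_add two_ne_zero (by norm_num)]
      congr 1
      ring
    have hRHS : ENNReal.ofReal (C * 2 ^ (-(N:ℝ))) = ENNReal.ofReal C * (2:ℝ≥0∞) ^ (-(N:ℤ)) := by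
      rw [ENNReal.ofReal_mul (by positivity), hrexp,
        ENNReal.ofReal_inv_of_pos (by positivity), ENNReal.ofReal_pow (by norm_num),
        ENNReal.ofReal_ofNat, ENNReal.zpow_neg, zpow_natCast]
    calc volume E ≤ volume (⋃ b : u, closedBall (Qc b) (4 * Qr b)) := measure_mono hEcov
      _ ≤ ∑' b : u, volume (closedBall (Qc b) (4 * Qr b)) := measure_iUnion_le _
      _ = ∑' b : u, ENNReal.ofReal (4^n) * volume (closedBall (Qc b) (Qr b)) := by
          refine tsum_congr fun b => ?_
          have hrb := hQr b (huE b.2)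
          rw [vol_cb _ (by positivity : (0:ℝ) ≤ 4 * Qr (b : Fin n → ℝ)), vol_cb _ hrb.le,
            show (2*(4*Qr (b : Fin n → ℝ))) = 4*(2*Qr (b : Fin n → ℝ)) by ring, mul_pow,
            ENNReal.ofReal_mul (by positivity)]
      _ = ENNReal.ofReal (4^n) * ∑' b : u, volume (closedBall (Qc b) (Qr b)) :=
          ENNReal.tsum_mul_left
      _ ≤ ENNReal.ofReal (4^n) *
          ∑' b : u, ((2:ℝ≥0∞)^k)⁻¹ * ∫⁻ y in closedBall (Qc b) (Qr b), g y := by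
          gcongr with b
          have hi := hQint b (huE b.2)
          calc volume (closedBall (Qc (b : Fin n → ℝ)) (Qr b))
              = ((2:ℝ≥0∞)^k)⁻¹ *
                ((2:ℝ≥0∞)^k * volume (closedBall (Qc (b : Fin n → ℝ)) (Qr b))) := by
                rw [← mul_assoc, ENNReal.inv_mul_cancel h2k0 h2kt, one_mul]
            _ ≤ _ := mul_le_mul_right hi.le _
      _ = ENNReal.ofReal (4^n) *
          (((2:ℝ≥0∞)^k)⁻¹ * ∑' b : u, ∫⁻ y in closedBall (Qc b) (Qr b), g y) := by
          rw [ENNReal.tsum_mul_left]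
      _ = ENNReal.ofReal (4^n) *
          (((2:ℝ≥0∞)^k)⁻¹ * ∫⁻ y in ⋃ b : u, closedBall (Qc b) (Qr b), g y) := by
          rw [lintegral_iUnion hmble hdisj]
      _ ≤ ENNReal.ofReal (4^n) *
          (((2:ℝ≥0∞)^k)⁻¹ * ∫⁻ y in closedBall z (2*(32*n*rP)), g y) := by
          gcongr
          exact husub.trans hB''
      _ ≤ ENNReal.ofReal (4^n) *
          (((2:ℝ≥0∞)^k)⁻¹ * (volume (closedBall z (2*(32*n*rP))) * 2^(k-(N:ℤ)))) := by
          gcongr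
      _ ≤ ENNReal.ofReal (C * 2^(-(N:ℝ))) * volume (closedBall cP rP) := by
          rw [hRHS, vol_cb cP hrP.le]
          calc ENNReal.ofReal (4^n) *
              (((2:ℝ≥0∞)^k)⁻¹ * (volume (closedBall z (2*(32*n*rP))) * 2^(k-(N:ℤ))))
              = (ENNReal.ofReal (4^n) * volume (closedBall z (2*(32*n*rP)))) *
                (((2:ℝ≥0∞)^k)⁻¹ * 2^(k-(N:ℤ))) := by ring
            _ = (ENNReal.ofReal (4^n) * ENNReal.ofReal ((2*(2*(32*n*rP)))^n)) * 2^(-(N:ℤ)) := by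
                rw [hzp, vol_cb z (by positivity)]
            _ ≤ (ENNReal.ofReal C * ENNReal.ofReal ((2*rP)^n)) * 2^(-(N:ℤ)) := by
                apply mul_le_mul_left
                rw [← ENNReal.ofReal_mul (by positivity), ← ENNReal.ofReal_mul (by positivity)]
                apply ENNReal.ofReal_le_ofReal
                calc (4:ℝ)^n * (2*(2*(32*n*rP)))^n = (256*(n:ℝ))^n * (2*rP)^n := by
                      rw [← mul_pow, ← mul_pow]
                      congr 1
                      ring
                  _ ≤ C * (2*rP)^n := by
                      apply mul_le_mul_of_nonneg_right _ (by positivity)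
                      have h25 : (0:ℝ) ≤ 25^n := by positivity
                      rw [hC]
                      linarith
            _ = ENNReal.ofReal C * 2^(-(N:ℤ)) * ENNReal.ofReal ((2*rP)^n) := by ring

end
end
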